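/- Let G be a connected non-degenerate trigraph and let G' be an optimal antithickening of G with thickening map I. Then for any semiadjacent pair of vertices a, b of G', either |I(a)| = |I(b)| = 1 and the unique vertices of I(a) and I(b) are semiadjacent in G, or (I(a), I(b)) is a deletion-minimal homogeneous pair of strong cliques of G. -/

import Mathlib

/-- A trigraph on a vertex type `V`: a symmetric adjacency function with values in
`{1, 0, -1}`, zero on the diagonal, such that semiedges form a matching. -/
structure Trigraph (V : Type) where
  θ : V → V → ℤ
  range_mem : ∀ u v, θ u v = 1 ∨ θ u v = 0 ∨ θ u v = -1
  symm : ∀ u v, θ u v = θ v u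
  refl_zero : ∀ v, θ v v = 0
  semi_matching : ∀ u v w : V, u ≠ v → u ≠ w → v ≠ w → θ u v = 0 → θ u w ≠ 0

namespace Trigraph

variable {V V' V'' : Type}

/-- `u` and `v` are strongly adjacent. -/
def StrongAdj (G : Trigraph V) (u v : V) : Prop := G.θ u v = 1

/-- Distinct `u` and `v` are semiadjacent. -/
def SemiAdj (G : Trigraph V) (u v : V) : Prop := u ≠ v ∧ G.θ u v = 0

/-- Distinct `u` and `v` are adjacent. -/
def Adj (G : Trigraph V) (u v : V) : Prop := u ≠ v ∧ (G.θ u v = 1 ∨ G.θ u v = 0)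

/-- Distinct `u` and `v` are antiadjacent. -/
def AntiAdj (G : Trigraph V) (u v : V) : Prop := u ≠ v ∧ (G.θ u v = 0 ∨ G.θ u v = -1)

/-- `u` and `v` are strongly antiadjacent. -/
def StrongAntiAdj (G : Trigraph V) (u v : V) : Prop := G.θ u v = -1

/-- `X` is strongly complete to `Y`. -/
def StronglyComplete (G : Trigraph V) (X Y : Set V) : Prop :=
  ∀ u ∈ X, ∀ v ∈ Y, G.StrongAdj u v

/-- `X` is strongly anticomplete to `Y`. -/
def StronglyAnticomplete (G : Trigraph V) (X Y : Set V) : Prop :=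
  ∀ u ∈ X, ∀ v ∈ Y, G.StrongAntiAdj u v

/-- A strong clique: pairwise strongly adjacent vertices. -/
def IsStrongClique (G : Trigraph V) (K : Set V) : Prop := K.Pairwise G.StrongAdj

/-- A stable set: pairwise antiadjacent vertices. -/
def IsStableSet (G : Trigraph V) (S : Set V) : Prop := S.Pairwise G.AntiAdj

/-- The neighbourhood of a vertex: the set of vertices adjacent to it. -/
def neighborhood (G : Trigraph V) (v : V) : Set V := {u | G.Adj v u}

/-- Claw-free: no vertex has three pairwise antiadjacent vertices in its neighbourhood. -/
def ClawFree (G : Trigraph V) : Prop :=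
  ¬ ∃ v a b c : V, G.Adj v a ∧ G.Adj v b ∧ G.Adj v c ∧
    G.AntiAdj a b ∧ G.AntiAdj a c ∧ G.AntiAdj b c

/-- Cobipartite: the vertex set is the union of two strong cliques. -/
def Cobipartite (G : Trigraph V) : Prop :=
  ∃ K1 K2 : Set V, G.IsStrongClique K1 ∧ G.IsStrongClique K2 ∧ K1 ∪ K2 = Set.univ

/-- Quasi-line: the neighbourhood of every vertex is the union of two strong cliques. -/
def QuasiLine (G : Trigraph V) : Prop :=
  ∀ v : V, ∃ K1 K2 : Set V, G.IsStrongClique K1 ∧ G.IsStrongClique K2 ∧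
    G.neighborhood v = K1 ∪ K2

/-- Connected: any two vertices are joined by a sequence of consecutively adjacent vertices. -/
def Connected (G : Trigraph V) : Prop :=
  ∀ u v : V, Relation.ReflTransGen G.Adj u v

/-- Non-degenerate: quasi-line and not cobipartite, or claw-free with stability number ≥ 3. -/
def NonDegenerate (G : Trigraph V) : Prop :=
  (G.QuasiLine ∧ ¬ G.Cobipartite) ∨
  (G.ClawFree ∧ ∃ S : Set V, G.IsStableSet S ∧ 3 ≤ S.ncard)

/-- A homogeneous set: `|V| > |X| ≥ 2` and every vertex outside `X` is strongly complete
or strongly anticomplete to `X`. -/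
def HomogeneousSet (G : Trigraph V) (X : Set V) : Prop :=
  2 ≤ X.ncard ∧ X ≠ Set.univ ∧
  ∀ v ∉ X, G.StronglyComplete {v} X ∨ G.StronglyAnticomplete {v} X

/-- `v1 v2 v3 v4` is a square: the pairs `v1v3`, `v2v4` are antiadjacent and the other
four pairs are adjacent. -/
def IsSquare (G : Trigraph V) (v1 v2 v3 v4 : V) : Prop :=
  G.AntiAdj v1 v3 ∧ G.AntiAdj v2 v4 ∧
  G.Adj v1 v2 ∧ G.Adj v2 v3 ∧ G.Adj v3 v4 ∧ G.Adj v4 v1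

/-- `X` contains a square. -/
def HasSquareIn (G : Trigraph V) (X : Set V) : Prop :=
  ∃ v1 v2 v3 v4 : V, G.IsSquare v1 v2 v3 v4 ∧ ({v1, v2, v3, v4} : Set V) ⊆ X

/-- Homogeneous pair of strong cliques `(A, B)`. -/
def HPOSC (G : Trigraph V) (A B : Set V) : Prop :=
  A.Nonempty ∧ B.Nonempty ∧ Disjoint A B ∧
  G.IsStrongClique A ∧ G.IsStrongClique B ∧
  ¬ (∃ a b : V, A = {a} ∧ B = {b}) ∧
  ∀ v ∉ A ∪ B,
    (G.StronglyComplete {v} A ∨ G.StronglyAnticomplete {v} A) ∧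
    (G.StronglyComplete {v} B ∨ G.StronglyAnticomplete {v} B)

/-- Deletion-minimal homogeneous pair of strong cliques. -/
def DeletionMinimal (G : Trigraph V) (A B : Set V) : Prop :=
  G.HPOSC A B ∧ G.HasSquareIn (A ∪ B) ∧
  (∀ a ∈ A, ¬ G.StronglyComplete {a} B ∧ ¬ G.StronglyAnticomplete {a} B) ∧
  (∀ b ∈ B, ¬ G.StronglyComplete {b} A ∧ ¬ G.StronglyAnticomplete {b} A)

/-- There is a square contained in `X` intersecting both `S1` and `S2`. -/
def SquareMeets (G : Trigraph V) (X S1 S2 : Set V) : Prop :=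
  ∃ v1 v2 v3 v4 : V, G.IsSquare v1 v2 v3 v4 ∧ ({v1, v2, v3, v4} : Set V) ⊆ X ∧
    (({v1, v2, v3, v4} : Set V) ∩ S1).Nonempty ∧
    (({v1, v2, v3, v4} : Set V) ∩ S2).Nonempty

/-- Square-connected homogeneous pair of strong cliques. -/
def SquareConnected (G : Trigraph V) (A B : Set V) : Prop :=
  G.HPOSC A B ∧
  (∀ A' A'' : Set V, A'.Nonempty → A''.Nonempty → A' ∪ A'' = A → Disjoint A' A'' →
    G.SquareMeets (A ∪ B) A' A'') ∧
  (∀ B' B'' : Set V, B'.Nonempty → B''.Nonempty → B' ∪ B'' = B → Disjoint B' B'' →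
    G.SquareMeets (A ∪ B) B' B'')

/-- Inclusion-maximal square-connected homogeneous pair of strong cliques. -/
def MaxSquareConnected (G : Trigraph V) (A B : Set V) : Prop :=
  G.SquareConnected A B ∧
  ∀ A' B' : Set V, G.SquareConnected A' B' → A ⊆ A' → B ⊆ B' → A' = A ∧ B' = B

/-- Two homogeneous pairs have skew intersection if a part of one intersects both
parts of the other. -/
def SkewIntersection (A1 B1 A2 B2 : Set V) : Prop :=
  ((A1 ∩ A2).Nonempty ∧ (A1 ∩ B2).Nonempty) ∨
  ((B1 ∩ A2).Nonempty ∧ (B1 ∩ B2).Nonempty) ∨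
  ((A2 ∩ A1).Nonempty ∧ (A2 ∩ B1).Nonempty) ∨
  ((B2 ∩ A1).Nonempty ∧ (B2 ∩ B1).Nonempty)

/-- Laminar: contains no square-connected homogeneous pair of strong cliques. -/
def Laminar (G : Trigraph V) : Prop := ¬ ∃ A B : Set V, G.SquareConnected A B

/-- `G` is a thickening of `G'` via the map `I` (equivalently, `G'` is an antithickening
of `G`): the `I v` are nonempty strong cliques partitioning `V(G)` respecting adjacency. -/
def IsThickening (G : Trigraph V) (G' : Trigraph V') (I : V' → Set V) : Prop :=
  (∀ v : V', (I v).Nonempty ∧ G.IsStrongClique (I v)) ∧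
  (∀ u v : V', u ≠ v → Disjoint (I u) (I v)) ∧
  (⋃ v : V', I v) = Set.univ ∧
  ∀ u v : V', u ≠ v →
    (G'.StrongAdj u v → G.StronglyComplete (I u) (I v)) ∧
    (G'.StrongAntiAdj u v → G.StronglyAnticomplete (I u) (I v)) ∧
    (G'.SemiAdj u v →
      ¬ G.StronglyComplete (I u) (I v) ∧ ¬ G.StronglyAnticomplete (I u) (I v))

/-- `G'` (with thickening map `I`) is an optimal antithickening of `G`: it is a laminar
antithickening with the maximum possible number of vertices. -/
def OptimalAntithickening (G : Trigraph V) (G' : Trigraph V') (I : V' → Set V) : Prop :=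
  G.IsThickening G' I ∧ G'.Laminar ∧
  ∀ (W : Type) (H : Trigraph W) (J : W → Set V),
    G.IsThickening H J → H.Laminar → Nat.card W ≤ Nat.card V'

/-- Isomorphism of trigraphs. -/
def Isomorphic (G1 : Trigraph V) (G2 : Trigraph V') : Prop :=
  ∃ f : V ≃ V', ∀ u v : V, G2.θ (f u) (f v) = G1.θ u v

end Trigraph

namespace Trigraph

open Classical

variable {V V' : Type}

lemma Adj.symm2 {G : Trigraph V} {u v : V} (h : G.Adj u v) : G.Adj v u :=
  ⟨h.1.symm, by rw [G.symm]; exact h.2⟩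

lemma AntiAdj.symm2 {G : Trigraph V} {u v : V} (h : G.AntiAdj u v) : G.AntiAdj v u :=
  ⟨h.1.symm, by rw [G.symm]; exact h.2⟩

lemma adj_of_ne {G : Trigraph V} {u v : V} (hne : u ≠ v) (h : G.θ u v ≠ -1) : G.Adj u v := by
  rcases G.range_mem u v with h1 | h1 | h1 <;> simp [Adj, hne, h1] at h ⊢

lemma antiAdj_of_ne {G : Trigraph V} {u v : V} (hne : u ≠ v) (h : G.θ u v ≠ 1) :
    G.AntiAdj u v := by
  rcases G.range_mem u v with h1 | h1 | h1 <;> simp [AntiAdj, hne, h1] at h ⊢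

lemma Adj.ne_neg {G : Trigraph V} {u v : V} (h : G.Adj u v) : G.θ u v ≠ -1 := by
  rcases h.2 with h2 | h2 <;> rw [h2] <;> decide

lemma AntiAdj.ne_one {G : Trigraph V} {u v : V} (h : G.AntiAdj u v) : G.θ u v ≠ 1 := by
  rcases h.2 with h2 | h2 <;> rw [h2] <;> decide

lemma IsStrongClique.theta_eq {G : Trigraph V} {K : Set V} (h : G.IsStrongClique K)
    {u v : V} (hu : u ∈ K) (hv : v ∈ K) (hne : u ≠ v) : G.θ u v = 1 :=
  h hu hv hne

lemma IsStrongClique.not_antiAdj {G : Trigraph V} {K : Set V} (h : G.IsStrongClique K)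
    {u v : V} (hu : u ∈ K) (hv : v ∈ K) (hadj : G.AntiAdj u v) : False :=
  hadj.ne_one (h hu hv hadj.1)

/-- rotation of a square -/
lemma IsSquare.rot {G : Trigraph V} {v1 v2 v3 v4 : V} (h : G.IsSquare v1 v2 v3 v4) :
    G.IsSquare v2 v3 v4 v1 := by
  obtain ⟨h13, h24, h12, h23, h34, h41⟩ := h
  exact ⟨h24, h13.symm2, h23, h34, h41, h12⟩

lemma IsSquare.distinct {G : Trigraph V} {v1 v2 v3 v4 : V} (h : G.IsSquare v1 v2 v3 v4) :
    v1 ≠ v2 ∧ v1 ≠ v3 ∧ v1 ≠ v4 ∧ v2 ≠ v3 ∧ v2 ≠ v4 ∧ v3 ≠ v4 := by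
  obtain ⟨h13, h24, h12, h23, h34, h41⟩ := h
  exact ⟨h12.1, h13.1, h41.1.symm, h23.1, h24.1, h34.1⟩

/-- Extract the crossing structure of a square contained in the union of
two disjoint strong cliques. -/
lemma cross_of_square {G : Trigraph V} {P Q : Set V}
    (hP : G.IsStrongClique P) (hQ : G.IsStrongClique Q) (hd : Disjoint P Q)
    {v1 v2 v3 v4 : V} (hsq : G.IsSquare v1 v2 v3 v4)
    (hsub : ({v1, v2, v3, v4} : Set V) ⊆ P ∪ Q) :
    ∃ p p' q q', p ∈ P ∧ p' ∈ P ∧ q ∈ Q ∧ q' ∈ Q ∧ p ≠ p' ∧ q ≠ q' ∧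
      G.Adj p q ∧ G.Adj p' q' ∧ G.AntiAdj p q' ∧ G.AntiAdj p' q ∧
      (∀ w, w ∈ ({v1, v2, v3, v4} : Set V) → w = p ∨ w = p' ∨ w = q ∨ w = q') ∧
      p ∈ ({v1, v2, v3, v4} : Set V) ∧ p' ∈ ({v1, v2, v3, v4} : Set V) ∧
      q ∈ ({v1, v2, v3, v4} : Set V) ∧ q' ∈ ({v1, v2, v3, v4} : Set V) := by
  obtain ⟨h13, h24, h12, h23, h34, h41⟩ := hsq
  have m1 : v1 ∈ P ∪ Q := hsub (by simp)
  have m2 : v2 ∈ P ∪ Q := hsub (by simp)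
  have m3 : v3 ∈ P ∪ Q := hsub (by simp)
  have m4 : v4 ∈ P ∪ Q := hsub (by simp)
  have split13 : (v1 ∈ P ∧ v3 ∈ Q) ∨ (v1 ∈ Q ∧ v3 ∈ P) := by
    rcases m1 with h1 | h1 <;> rcases m3 with h3 | h3
    · exact absurd (hP h1 h3 h13.1) h13.ne_one
    · exact Or.inl ⟨h1, h3⟩
    · exact Or.inr ⟨h1, h3⟩
    · exact absurd (hQ h1 h3 h13.1) h13.ne_one
  have split24 : (v2 ∈ P ∧ v4 ∈ Q) ∨ (v2 ∈ Q ∧ v4 ∈ P) := by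
    rcases m2 with h2 | h2 <;> rcases m4 with h4 | h4
    · exact absurd (hP h2 h4 h24.1) h24.ne_one
    · exact Or.inl ⟨h2, h4⟩
    · exact Or.inr ⟨h2, h4⟩
    · exact absurd (hQ h2 h4 h24.1) h24.ne_one
  rcases split13 with ⟨hp1, hq3⟩ | ⟨hq1, hp3⟩ <;> rcases split24 with ⟨hp2, hq4⟩ | ⟨hq2, hp4⟩
  · -- v1 v2 ∈ P, v3 v4 ∈ Q : (p,p',q,q') = (v1, v2, v4, v3)
    refine ⟨v1, v2, v4, v3, hp1, hp2, hq4, hq3, h12.1, h34.1.symm,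
      h41.symm2, h23, h13, h24, ?_, by simp, by simp, by simp, by simp⟩
    intro w hw
    simp only [Set.mem_insert_iff, Set.mem_singleton_iff] at hw
    tauto
  · -- v1 v4 ∈ P, v2 v3 ∈ Q : (v1, v4, v2, v3)
    refine ⟨v1, v4, v2, v3, hp1, hp4, hq2, hq3, h41.1.symm, h23.1,
      h12, h34.symm2, h13, h24.symm2, ?_, by simp, by simp, by simp, by simp⟩
    intro w hw
    simp only [Set.mem_insert_iff, Set.mem_singleton_iff] at hw
    tauto
  · -- v1 v2 ∈ Q?? no: v1 ∈ Q, v3 ∈ P, v2 ∈ P, v4 ∈ Q : (v3, v2, v4, v1)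
    refine ⟨v3, v2, v4, v1, hp3, hp2, hq4, hq1, h23.1.symm, h41.1,
      h34, h12.symm2, h13.symm2, h24, ?_, by simp, by simp, by simp, by simp⟩
    intro w hw
    simp only [Set.mem_insert_iff, Set.mem_singleton_iff] at hw
    tauto
  · -- v1 ∈ Q, v3 ∈ P, v2 ∈ Q, v4 ∈ P : (v3, v4, v2, v1)
    refine ⟨v3, v4, v2, v1, hp3, hp4, hq2, hq1, h34.1, h12.1.symm,
      h23.symm2, h41, h13.symm2, h24.symm2, ?_, by simp, by simp, by simp, by simp⟩
    intro w hw
    simp only [Set.mem_insert_iff, Set.mem_singleton_iff] at hw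
    tauto

/-- build a square from crossing data -/
lemma square_of_cross {G : Trigraph V} {P Q : Set V}
    (hP : G.IsStrongClique P) (hQ : G.IsStrongClique Q) (hd : Disjoint P Q)
    {p p' q q' : V} (hp : p ∈ P) (hp' : p' ∈ P) (hq : q ∈ Q) (hq' : q' ∈ Q)
    (hpp : p ≠ p') (hqq : q ≠ q')
    (h1 : G.Adj p q) (h2 : G.Adj p' q') (h3 : G.AntiAdj p q') (h4 : G.AntiAdj p' q) :
    G.IsSquare p p' q' q := by
  refine ⟨h3, h4, ⟨hpp, Or.inl (hP hp hp' hpp)⟩, h2, ⟨hqq.symm, Or.inl (hQ hq' hq hqq.symm)⟩,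
    h1.symm2⟩

lemma SquareConnected.symm2 {G : Trigraph V} {A B : Set V} (h : G.SquareConnected A B) :
    G.SquareConnected B A := by
  obtain ⟨⟨hA, hB, hd, hcA, hcB, hns, hhom⟩, hpA, hpB⟩ := h
  have hu : A ∪ B = B ∪ A := Set.union_comm A B
  refine ⟨⟨hB, hA, hd.symm, hcB, hcA, ?_, ?_⟩, by rw [← hu] at *; exact hpB, by rw [← hu] at *; exact hpA⟩
  · rintro ⟨x, y, h1, h2⟩; exact hns ⟨y, x, h2, h1⟩
  · intro v hv
    rw [Set.union_comm] at hv
    exact (hhom v hv).symm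

end Trigraph

namespace Trigraph

variable {V : Type}

lemma SquareConnected.exists_square {G : Trigraph V} {P Q : Set V}
    (h : G.SquareConnected P Q) :
    ∃ v1 v2 v3 v4, G.IsSquare v1 v2 v3 v4 ∧ ({v1, v2, v3, v4} : Set V) ⊆ P ∪ Q := by
  obtain ⟨⟨⟨p₁, hp₁⟩, ⟨q₁, hq₁⟩, hd, hcP, hcQ, hns, hhom⟩, hpP, hpQ⟩ := h
  by_cases h2 : ∃ p₂ ∈ P, p₂ ≠ p₁
  · obtain ⟨p₂, hp₂, hne⟩ := h2
    obtain ⟨v1, v2, v3, v4, hsq, hsub, -, -⟩ :=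
      hpP {p₁} (P \ {p₁}) ⟨p₁, rfl⟩ ⟨p₂, hp₂, hne⟩
        (Set.union_diff_cancel' (by simp [hp₁]) (by simp [hp₁])) (by simp)
    exact ⟨v1, v2, v3, v4, hsq, hsub⟩
  · by_cases h3 : ∃ q₂ ∈ Q, q₂ ≠ q₁
    · obtain ⟨q₂, hq₂, hne⟩ := h3
      obtain ⟨v1, v2, v3, v4, hsq, hsub, -, -⟩ :=
        hpQ {q₁} (Q \ {q₁}) ⟨q₁, rfl⟩ ⟨q₂, hq₂, hne⟩
          (Set.union_diff_cancel' (by simp [hq₁]) (by simp [hq₁])) (by simp)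
      exact ⟨v1, v2, v3, v4, hsq, hsub⟩
    · push_neg at h2 h3
      exact absurd ⟨p₁, q₁, Set.eq_singleton_iff_unique_mem.2 ⟨hp₁, h2⟩,
        Set.eq_singleton_iff_unique_mem.2 ⟨hq₁, h3⟩⟩ hns

lemma SquareConnected.two_le {G : Trigraph V} {P Q : Set V}
    (h : G.SquareConnected P Q) :
    (∃ p p', p ∈ P ∧ p' ∈ P ∧ p ≠ p') ∧ (∃ q q', q ∈ Q ∧ q' ∈ Q ∧ q ≠ q') := by
  obtain ⟨v1, v2, v3, v4, hsq, hsub⟩ := h.exists_square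
  obtain ⟨p, p', q, q', hp, hp', hq, hq', hpp, hqq, -, -, -, -, -, -⟩ :=
    cross_of_square h.1.2.2.2.1 h.1.2.2.2.2.1 h.1.2.2.1 hsq hsub
  exact ⟨⟨p, p', hp, hp', hpp⟩, ⟨q, q', hq, hq', hqq⟩⟩

/-- Every vertex of `P` lies in a square inside `P ∪ Q`. -/
lemma SquareConnected.square_through {G : Trigraph V} {P Q : Set V}
    (h : G.SquareConnected P Q) {p : V} (hp : p ∈ P) :
    ∃ v1 v2 v3 v4, G.IsSquare v1 v2 v3 v4 ∧ ({v1, v2, v3, v4} : Set V) ⊆ P ∪ Q ∧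
      p ∈ ({v1, v2, v3, v4} : Set V) := by
  obtain ⟨⟨pa, pb, hpa, hpb, hne⟩, -⟩ := h.two_le
  have hsec : ∃ p₂ ∈ P, p₂ ≠ p := by
    rcases eq_or_ne pa p with rfl | hh
    · exact ⟨pb, hpb, hne.symm⟩
    · exact ⟨pa, hpa, hh⟩
  obtain ⟨p₂, hp₂, hne₂⟩ := hsec
  obtain ⟨v1, v2, v3, v4, hsq, hsub, hm1, -⟩ :=
    h.2.1 {p} (P \ {p}) ⟨p, rfl⟩ ⟨p₂, hp₂, hne₂⟩
      (Set.union_diff_cancel' (by simp [hp]) (by simp [hp])) (by simp)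
  obtain ⟨w, hw, hw'⟩ := hm1
  rcases hw' with rfl
  exact ⟨v1, v2, v3, v4, hsq, hsub, hw⟩

/-- crossing structure attached at a given vertex of `P`. -/
lemma SquareConnected.cross_at {G : Trigraph V} {P Q : Set V}
    (h : G.SquareConnected P Q) {p : V} (hp : p ∈ P) :
    ∃ p' q q', p' ∈ P ∧ q ∈ Q ∧ q' ∈ Q ∧ p ≠ p' ∧ q ≠ q' ∧
      G.Adj p q ∧ G.Adj p' q' ∧ G.AntiAdj p q' ∧ G.AntiAdj p' q := by
  obtain ⟨v1, v2, v3, v4, hsq, hsub, hmem⟩ := h.square_through hp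
  obtain ⟨pc, pc', qc, qc', hpc, hpc', hqc, hqc', hpp, hqq, ha1, ha2, ha3, ha4, hcov, -, -, -, -⟩ :=
    cross_of_square h.1.2.2.2.1 h.1.2.2.2.2.1 h.1.2.2.1 hsq hsub
  have hd := h.1.2.2.1
  rcases hcov p hmem with rfl | rfl | rfl | rfl
  · exact ⟨pc', qc, qc', hpc', hqc, hqc', hpp, hqq, ha1, ha2, ha3, ha4⟩
  · exact ⟨pc, qc', qc, hpc, hqc', hqc, hpp.symm, hqq.symm, ha2, ha1, ha4, ha3⟩
  · exact absurd hp (fun hp => hd.ne_of_mem hp hqc rfl)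
  · exact absurd hp (fun hp => hd.ne_of_mem hp hqc' rfl)

end Trigraph

namespace Trigraph

open Classical in
/-- vertex set of the refinement: old vertices other than `a`, `b`, plus new classes. -/
abbrev RefV (V' : Type) (a b : V') (Aι Bι : Type) : Type :=
  {v : V' // v ≠ a ∧ v ≠ b} ⊕ (Aι ⊕ Bι)

open Classical in
/-- adjacency function of the refinement -/
noncomputable def refθ {V' : Type} (G' : Trigraph V') (a b : V') {Aι Bι : Type}
    (M : Aι → Bι → ℤ) : RefV V' a b Aι Bι → RefV V' a b Aι Bι → ℤ
  | .inl u, .inl v => G'.θ u.1 v.1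
  | .inl u, .inr (.inl _) => G'.θ u.1 a
  | .inl u, .inr (.inr _) => G'.θ u.1 b
  | .inr (.inl _), .inl v => G'.θ a v.1
  | .inr (.inr _), .inl v => G'.θ b v.1
  | .inr (.inl α), .inr (.inl α') => if α = α' then 0 else 1
  | .inr (.inr β), .inr (.inr β') => if β = β' then 0 else 1
  | .inr (.inl α), .inr (.inr β) => M α β
  | .inr (.inr β), .inr (.inl α) => M α β

section GTL

variable {V' : Type} (G' : Trigraph V') (a b : V') {Aι Bι : Type} (M : Aι → Bι → ℤ)

theorem theta_a_ne (hne : a ≠ b) (h0 : G'.θ a b = 0) {w : V'} (hwa : w ≠ a) (hwb : w ≠ b) :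
    G'.θ a w ≠ 0 :=
  G'.semi_matching a b w hne (Ne.symm hwa) (Ne.symm hwb) h0

theorem theta_b_ne (hne : a ≠ b) (h0 : G'.θ a b = 0) {w : V'} (hwa : w ≠ a) (hwb : w ≠ b) :
    G'.θ b w ≠ 0 :=
  G'.semi_matching b a w hne.symm (Ne.symm hwb) (Ne.symm hwa) (by rw [← G'.symm]; exact h0)

variable (hne : a ≠ b) (h0 : G'.θ a b = 0)
  (hMr : ∀ α β, M α β = 1 ∨ M α β = 0 ∨ M α β = -1)
  (hM0r : ∀ α β β', M α β = 0 → M α β' = 0 → β = β')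
  (hM0l : ∀ α α' β, M α β = 0 → M α' β = 0 → α = α')

open Classical in
/-- the refinement trigraph -/
noncomputable def refT : Trigraph (RefV V' a b Aι Bι) where
  θ := refθ G' a b M
  range_mem := by
    rintro (u | α | β) (v | α' | β') <;> simp only [refθ]
    · exact G'.range_mem _ _
    · exact G'.range_mem _ _
    · exact G'.range_mem _ _
    · exact G'.range_mem _ _
    · split
      · exact Or.inr (Or.inl rfl)
      · exact Or.inl rfl
    · exact hMr α β'
    · exact G'.range_mem _ _
    · exact hMr α' β
    · split
      · exact Or.inr (Or.inl rfl)
      · exact Or.inl rfl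
  symm := by
    rintro (u | α | β) (v | α' | β') <;> simp only [refθ]
    · exact G'.symm _ _
    · exact G'.symm _ _
    · exact G'.symm _ _
    · exact G'.symm _ _
    · rcases eq_or_ne α α' with rfl | h
      · simp
      · simp [h, Ne.symm h]
    · exact G'.symm _ _
    · rcases eq_or_ne β β' with rfl | h
      · simp
      · simp [h, Ne.symm h]
  refl_zero := by
    rintro (u | α | β) <;> simp [refθ, G'.refl_zero]
  semi_matching := by
    have haz : ∀ w : V', w ≠ a → w ≠ b → G'.θ a w ≠ 0 := fun w h1 h2 =>
      theta_a_ne G' a b hne h0 h1 h2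
    have hbz : ∀ w : V', w ≠ a → w ≠ b → G'.θ b w ≠ 0 := fun w h1 h2 =>
      theta_b_ne G' a b hne h0 h1 h2
    rintro (u | α | β) (v | α' | β') (w | α'' | β'') huv huw hvw h <;> simp only [refθ] at h ⊢
    -- u = inl u
    · -- v=inl, w=inl
      exact G'.semi_matching u.1 v.1 w.1 (fun hh => huv (by cases u; cases v; simp_all))
        (fun hh => huw (by cases u; cases w; simp_all))
        (fun hh => hvw (by cases v; cases w; simp_all)) h
    · -- v=inl, w=α''
      have := G'.semi_matching u.1 v.1 a (fun hh => huv (by cases u; cases v; simp_all))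
        u.2.1 v.2.1 h
      exact this
    · have := G'.semi_matching u.1 v.1 b (fun hh => huv (by cases u; cases v; simp_all))
        u.2.2 v.2.2 h
      exact this
    · -- v=α' : θ' u a = 0 impossible
      exact absurd (by rw [G'.symm]; exact h) (haz u.1 u.2.1 u.2.2)
    · exact absurd (by rw [G'.symm]; exact h) (haz u.1 u.2.1 u.2.2)
    · exact absurd (by rw [G'.symm]; exact h) (haz u.1 u.2.1 u.2.2)
    · -- v=β'
      exact absurd (by rw [G'.symm]; exact h) (hbz u.1 u.2.1 u.2.2)
    · exact absurd (by rw [G'.symm]; exact h) (hbz u.1 u.2.1 u.2.2)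
    · exact absurd (by rw [G'.symm]; exact h) (hbz u.1 u.2.1 u.2.2)
    -- u = α
    · -- v = inl : θ' a v = 0 impossible
      exact absurd h (haz v.1 v.2.1 v.2.2)
    · exact absurd h (haz v.1 v.2.1 v.2.2)
    · exact absurd h (haz v.1 v.2.1 v.2.2)
    · -- v = α' : value is 1 or contradiction
      have hαα : α ≠ α' := fun hh => huv (by rw [hh])
      simp [hαα] at h
    · have hαα : α ≠ α' := fun hh => huv (by rw [hh])
      simp [hαα] at h
    · have hαα : α ≠ α' := fun hh => huv (by rw [hh])
      simp [hαα] at h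
    · -- v = β' , w = inl w
      exact haz w.1 w.2.1 w.2.2
    · -- v = β', w = α''
      have hαα : α ≠ α'' := fun hh => huw (by rw [hh])
      simp [hαα]
    · -- v = β', w = β''
      have hββ : β' ≠ β'' := fun hh => hvw (by rw [hh])
      exact fun hc => hββ (hM0r α β' β'' h hc)
    -- u = β
    · exact absurd h (hbz v.1 v.2.1 v.2.2)
    · exact absurd h (hbz v.1 v.2.1 v.2.2)
    · exact absurd h (hbz v.1 v.2.1 v.2.2)
    · -- v = α', w = inl
      exact hbz w.1 w.2.1 w.2.2
    · -- v = α', w = α''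
      have hαα : α' ≠ α'' := fun hh => hvw (by rw [hh])
      exact fun hc => hαα (hM0l α' α'' β h hc)
    · -- v = α', w = β''
      have hββ : β ≠ β'' := fun hh => huw (by rw [hh])
      simp [hββ]
    · -- v = β' : ite
      have hββ : β ≠ β' := fun hh => huv (by rw [hh])
      simp [hββ] at h
    · have hββ : β ≠ β' := fun hh => huv (by rw [hh])
      simp [hββ] at h
    · have hββ : β ≠ β' := fun hh => huv (by rw [hh])
      simp [hββ] at h

end GTL
end Trigraph

namespace Trigraph
section GTLlam

variable {V' : Type} {G' : Trigraph V'} {a b : V'} {Aι Bι : Type} {M : Aι → Bι → ℤ}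
  {hne : a ≠ b} {h0 : G'.θ a b = 0}
  {hMr : ∀ α β, M α β = 1 ∨ M α β = 0 ∨ M α β = -1}
  {hM0r : ∀ α β β', M α β = 0 → M α β' = 0 → β = β'}
  {hM0l : ∀ α α' β, M α β = 0 → M α' β = 0 → α = α'}

local notation "H" => refT G' a b M hne h0 hMr hM0r hM0l
local notation "W" => RefV V' a b Aι Bι

@[simp] lemma refT_theta (u v : RefV V' a b Aι Bι) :
    (refT G' a b M hne h0 hMr hM0r hM0l).θ u v = refθ G' a b M u v := rfl

section NoTwo
variable (hNoSq : ∀ α α' β β', α ≠ α' → β ≠ β' → M α β ≠ 1 → M α' β' ≠ 1 →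
    M α' β ≠ -1 → M α β' ≠ -1 → False)

include hNoSq in
lemma key12A {α α' : Aι} {w3 w4 : RefV V' a b Aι Bι}
    (hsq : (refT G' a b M hne h0 hMr hM0r hM0l).IsSquare
      (Sum.inr (Sum.inl α)) (Sum.inr (Sum.inl α')) w3 w4) : False := by
  obtain ⟨h13, h24, h12, h23, h34, h41⟩ := hsq
  obtain ⟨hd12, hd13, hd14, hd23, hd24, hd34⟩ :=
    IsSquare.distinct (G := refT G' a b M hne h0 hMr hM0r hM0l) ⟨h13, h24, h12, h23, h34, h41⟩
  have hαα : α ≠ α' := fun hh => hd12 (by rw [hh])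
  rcases w3 with w | αc | βc
  · -- w3 = inl w
    have h1 : G'.θ a w.1 ≠ 1 := by simpa [refθ] using h13.ne_one
    have h2 : G'.θ a w.1 ≠ -1 := by simpa [refθ] using h23.ne_neg
    have hz : G'.θ a w.1 = 0 := by
      rcases G'.range_mem a w.1 with h | h | h
      exacts [absurd h h1, h, absurd h h2]
    exact theta_a_ne G' a b hne h0 w.2.1 w.2.2 hz
  · -- w3 = A-vertex
    have hαc : α ≠ αc := fun hh => hd13 (by rw [hh])
    have := h13.ne_one
    simp [refθ, hαc] at this
  · -- w3 = B-vertex βc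
    have hm1 : M α βc ≠ 1 := by simpa [refθ] using h13.ne_one
    have hm2 : M α' βc ≠ -1 := by simpa [refθ] using h23.ne_neg
    rcases w4 with w | α'' | β''
    · have h1 : G'.θ a w.1 ≠ 1 := by simpa [refθ] using h24.ne_one
      have h2 : G'.θ a w.1 ≠ -1 := by
        rw [G'.symm]; simpa [refθ] using h41.ne_neg
      have hz : G'.θ a w.1 = 0 := by
        rcases G'.range_mem a w.1 with h | h | h
        exacts [absurd h h1, h, absurd h h2]
      exact theta_a_ne G' a b hne h0 w.2.1 w.2.2 hz
    · have hαα'' : α' ≠ α'' := fun hh => hd24 (by rw [hh])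
      have := h24.ne_one
      simp [refθ, hαα''] at this
    · have hββ : βc ≠ β'' := fun hh => hd34 (by rw [hh])
      have hm3 : M α' β'' ≠ 1 := by simpa [refθ] using h24.ne_one
      have hm4 : M α β'' ≠ -1 := by simpa [refθ] using h41.ne_neg
      exact hNoSq α α' βc β'' hαα hββ hm1 hm3 hm2 hm4

include hNoSq in
lemma key12B {β β' : Bι} {w3 w4 : RefV V' a b Aι Bι}
    (hsq : (refT G' a b M hne h0 hMr hM0r hM0l).IsSquare
      (Sum.inr (Sum.inr β)) (Sum.inr (Sum.inr β')) w3 w4) : False := by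
  obtain ⟨h13, h24, h12, h23, h34, h41⟩ := hsq
  obtain ⟨hd12, hd13, hd14, hd23, hd24, hd34⟩ :=
    IsSquare.distinct (G := refT G' a b M hne h0 hMr hM0r hM0l) ⟨h13, h24, h12, h23, h34, h41⟩
  have hββ : β ≠ β' := fun hh => hd12 (by rw [hh])
  rcases w3 with w | αc | βc
  · have h1 : G'.θ b w.1 ≠ 1 := by simpa [refθ] using h13.ne_one
    have h2 : G'.θ b w.1 ≠ -1 := by simpa [refθ] using h23.ne_neg
    have hz : G'.θ b w.1 = 0 := by
      rcases G'.range_mem b w.1 with h | h | h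
      exacts [absurd h h1, h, absurd h h2]
    exact theta_b_ne G' a b hne h0 w.2.1 w.2.2 hz
  · -- w3 = A-vertex αc
    have hm1 : M αc β ≠ 1 := by simpa [refθ] using h13.ne_one
    have hm2 : M αc β' ≠ -1 := by simpa [refθ] using h23.ne_neg
    rcases w4 with w | α'' | β''
    · have h1 : G'.θ b w.1 ≠ 1 := by simpa [refθ] using h24.ne_one
      have h2 : G'.θ b w.1 ≠ -1 := by
        rw [G'.symm]; simpa [refθ] using h41.ne_neg
      have hz : G'.θ b w.1 = 0 := by
        rcases G'.range_mem b w.1 with h | h | h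
        exacts [absurd h h1, h, absurd h h2]
      exact theta_b_ne G' a b hne h0 w.2.1 w.2.2 hz
    · have hαα : αc ≠ α'' := fun hh => hd34 (by rw [hh])
      have hm3 : M α'' β' ≠ 1 := by simpa [refθ] using h24.ne_one
      have hm4 : M α'' β ≠ -1 := by simpa [refθ] using h41.ne_neg
      exact hNoSq αc α'' β β' hαα hββ hm1 hm3 hm4 hm2
    · have hββ'' : β' ≠ β'' := fun hh => hd24 (by rw [hh])
      have := h24.ne_one
      simp [refθ, hββ''] at this
  · have hβc : β ≠ βc := fun hh => hd13 (by rw [hh])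
    have := h13.ne_one
    simp [refθ, hβc] at this

lemma key13A {α α' : Aι} {w2 w4 : RefV V' a b Aι Bι}
    (hsq : (refT G' a b M hne h0 hMr hM0r hM0l).IsSquare
      (Sum.inr (Sum.inl α)) w2 (Sum.inr (Sum.inl α')) w4) : False := by
  have h13 := hsq.1
  have hαα : α ≠ α' := fun hh => h13.1 (by rw [hh])
  have := h13.ne_one
  simp [refθ, hαα] at this

lemma key13B {β β' : Bι} {w2 w4 : RefV V' a b Aι Bι}
    (hsq : (refT G' a b M hne h0 hMr hM0r hM0l).IsSquare
      (Sum.inr (Sum.inr β)) w2 (Sum.inr (Sum.inr β')) w4) : False := by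
  have h13 := hsq.1
  have hββ : β ≠ β' := fun hh => h13.1 (by rw [hh])
  have := h13.ne_one
  simp [refθ, hββ] at this

include hNoSq in
/-- a square of the refinement contains at most one `A`-class vertex. -/
lemma noTwoA {w1 w2 w3 w4 : RefV V' a b Aι Bι}
    (hsq : (refT G' a b M hne h0 hMr hM0r hM0l).IsSquare w1 w2 w3 w4)
    {α α' : Aι}
    (hm1 : Sum.inr (Sum.inl α) ∈ ({w1, w2, w3, w4} : Set (RefV V' a b Aι Bι)))
    (hm2 : Sum.inr (Sum.inl α') ∈ ({w1, w2, w3, w4} : Set (RefV V' a b Aι Bι)))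
    (hαα : α ≠ α') : False := by
  have hsq2 := hsq.rot
  have hsq3 := hsq.rot.rot
  have hsq4 := hsq.rot.rot.rot
  have hinj : (Sum.inr (Sum.inl α) : RefV V' a b Aι Bι) ≠ Sum.inr (Sum.inl α') := by
    simp [hαα]
  simp only [Set.mem_insert_iff, Set.mem_singleton_iff] at hm1 hm2
  rcases hm1 with h1 | h1 | h1 | h1 <;> rcases hm2 with h2 | h2 | h2 | h2 <;>
    subst h1 <;> first
      | (exact hinj (by rw [← h2]))
      | (subst h2; first
          | exact key12A hNoSq hsq
          | exact key13A hsq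
          | exact key12A hNoSq hsq2
          | exact key13A hsq2
          | exact key12A hNoSq hsq3
          | exact key13A hsq3
          | exact key12A hNoSq hsq4
          | exact key13A hsq4)

include hNoSq in
lemma noTwoB {w1 w2 w3 w4 : RefV V' a b Aι Bι}
    (hsq : (refT G' a b M hne h0 hMr hM0r hM0l).IsSquare w1 w2 w3 w4)
    {β β' : Bι}
    (hm1 : Sum.inr (Sum.inr β) ∈ ({w1, w2, w3, w4} : Set (RefV V' a b Aι Bι)))
    (hm2 : Sum.inr (Sum.inr β') ∈ ({w1, w2, w3, w4} : Set (RefV V' a b Aι Bι)))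
    (hββ : β ≠ β') : False := by
  have hsq2 := hsq.rot
  have hsq3 := hsq.rot.rot
  have hsq4 := hsq.rot.rot.rot
  have hinj : (Sum.inr (Sum.inr β) : RefV V' a b Aι Bι) ≠ Sum.inr (Sum.inr β') := by
    simp [hββ]
  simp only [Set.mem_insert_iff, Set.mem_singleton_iff] at hm1 hm2
  rcases hm1 with h1 | h1 | h1 | h1 <;> rcases hm2 with h2 | h2 | h2 | h2 <;>
    subst h1 <;> first
      | (exact hinj (by rw [← h2]))
      | (subst h2; first
          | exact key12B hNoSq hsq
          | exact key13B hsq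
          | exact key12B hNoSq hsq2
          | exact key13B hsq2
          | exact key12B hNoSq hsq3
          | exact key13B hsq3
          | exact key12B hNoSq hsq4
          | exact key13B hsq4)

end NoTwo
end GTLlam
end Trigraph

namespace Trigraph

/-- the collapse map from the refinement back to the original vertex set -/
def refρ {V' : Type} (a b : V') {Aι Bι : Type} : RefV V' a b Aι Bι → V'
  | .inl u => u.1
  | .inr (.inl _) => a
  | .inr (.inr _) => b

section GTLlam2

variable {V' : Type} {G' : Trigraph V'} {a b : V'} {Aι Bι : Type} {M : Aι → Bι → ℤ}
  {hne : a ≠ b} {h0 : G'.θ a b = 0}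
  {hMr : ∀ α β, M α β = 1 ∨ M α β = 0 ∨ M α β = -1}
  {hM0r : ∀ α β β', M α β = 0 → M α β' = 0 → β = β'}
  {hM0l : ∀ α α' β, M α β = 0 → M α' β = 0 → α = α'}

local notation "H" => refT G' a b M hne h0 hMr hM0r hM0l

lemma descend_adj {u v : RefV V' a b Aι Bι}
    (h : (refT G' a b M hne h0 hMr hM0r hM0l).Adj u v)
    (hA : ¬∃ α α', u = Sum.inr (Sum.inl α) ∧ v = Sum.inr (Sum.inl α'))
    (hB : ¬∃ β β', u = Sum.inr (Sum.inr β) ∧ v = Sum.inr (Sum.inr β')) :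
    G'.Adj (refρ a b u) (refρ a b v) := by
  rcases u with u | α | β <;> rcases v with v | α' | β' <;> simp only [refρ]
  · exact ⟨fun hh => h.1 (congrArg Sum.inl (Subtype.ext hh)), by simpa [refθ] using h.2⟩
  · exact ⟨u.2.1, by simpa [refθ] using h.2⟩
  · exact ⟨u.2.2, by simpa [refθ] using h.2⟩
  · exact ⟨Ne.symm v.2.1, by simpa [refθ] using h.2⟩
  · exact absurd ⟨α, α', rfl, rfl⟩ hA
  · exact ⟨hne, Or.inr h0⟩
  · exact ⟨Ne.symm v.2.2, by simpa [refθ] using h.2⟩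
  · exact ⟨hne.symm, Or.inr (by rw [G'.symm]; exact h0)⟩
  · exact absurd ⟨β, β', rfl, rfl⟩ hB

lemma descend_anti {u v : RefV V' a b Aι Bι}
    (h : (refT G' a b M hne h0 hMr hM0r hM0l).AntiAdj u v)
    (hA : ¬∃ α α', u = Sum.inr (Sum.inl α) ∧ v = Sum.inr (Sum.inl α'))
    (hB : ¬∃ β β', u = Sum.inr (Sum.inr β) ∧ v = Sum.inr (Sum.inr β')) :
    G'.AntiAdj (refρ a b u) (refρ a b v) := by
  rcases u with u | α | β <;> rcases v with v | α' | β' <;> simp only [refρ]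
  · exact ⟨fun hh => h.1 (congrArg Sum.inl (Subtype.ext hh)), by simpa [refθ] using h.2⟩
  · exact ⟨u.2.1, by simpa [refθ] using h.2⟩
  · exact ⟨u.2.2, by simpa [refθ] using h.2⟩
  · exact ⟨Ne.symm v.2.1, by simpa [refθ] using h.2⟩
  · exact absurd ⟨α, α', rfl, rfl⟩ hA
  · exact ⟨hne, Or.inl h0⟩
  · exact ⟨Ne.symm v.2.2, by simpa [refθ] using h.2⟩
  · exact ⟨hne.symm, Or.inl (by rw [G'.symm]; exact h0)⟩
  · exact absurd ⟨β, β', rfl, rfl⟩ hB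

variable (hNoSq : ∀ α α' β β', α ≠ α' → β ≠ β' → M α β ≠ 1 → M α' β' ≠ 1 →
    M α' β ≠ -1 → M α β' ≠ -1 → False)

include hNoSq in
lemma descend_square {w1 w2 w3 w4 : RefV V' a b Aι Bι}
    (hsq : (refT G' a b M hne h0 hMr hM0r hM0l).IsSquare w1 w2 w3 w4) :
    G'.IsSquare (refρ a b w1) (refρ a b w2) (refρ a b w3) (refρ a b w4) := by
  have hS : ∀ u v : RefV V' a b Aι Bι, u ∈ ({w1, w2, w3, w4} : Set (RefV V' a b Aι Bι)) →
      v ∈ ({w1, w2, w3, w4} : Set (RefV V' a b Aι Bι)) →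
      (¬∃ α α', u = Sum.inr (Sum.inl α) ∧ v = Sum.inr (Sum.inl α')) ∧
      (¬∃ β β', u = Sum.inr (Sum.inr β) ∧ v = Sum.inr (Sum.inr β')) ∨ u = v := by
    intro u v hu hv
    by_cases huv : u = v
    · exact Or.inr huv
    · refine Or.inl ⟨?_, ?_⟩
      · rintro ⟨α, α', rfl, rfl⟩
        exact noTwoA hNoSq hsq hu hv (fun hh => huv (by rw [hh]))
      · rintro ⟨β, β', rfl, rfl⟩
        exact noTwoB hNoSq hsq hu hv (fun hh => huv (by rw [hh]))
  obtain ⟨hd12, hd13, hd14, hd23, hd24, hd34⟩ := hsq.distinct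
  obtain ⟨h13, h24, h12, h23, h34, h41⟩ := hsq
  have m1 : w1 ∈ ({w1, w2, w3, w4} : Set (RefV V' a b Aι Bι)) := by simp
  have m2 : w2 ∈ ({w1, w2, w3, w4} : Set (RefV V' a b Aι Bι)) := by simp
  have m3 : w3 ∈ ({w1, w2, w3, w4} : Set (RefV V' a b Aι Bι)) := by simp
  have m4 : w4 ∈ ({w1, w2, w3, w4} : Set (RefV V' a b Aι Bι)) := by simp
  have g13 := (hS w1 w3 m1 m3).resolve_right hd13
  have g24 := (hS w2 w4 m2 m4).resolve_right hd24
  have g12 := (hS w1 w2 m1 m2).resolve_right hd12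
  have g23 := (hS w2 w3 m2 m3).resolve_right hd23
  have g34 := (hS w3 w4 m3 m4).resolve_right hd34
  have g41 := (hS w4 w1 m4 m1).resolve_right (Ne.symm hd14)
  exact ⟨descend_anti h13 g13.1 g13.2, descend_anti h24 g24.1 g24.2,
    descend_adj h12 g12.1 g12.2, descend_adj h23 g23.1 g23.2,
    descend_adj h34 g34.1 g34.2, descend_adj h41 g41.1 g41.2⟩

end GTLlam2
end Trigraph

namespace Trigraph
section GTLlam3

variable {V' : Type} {G' : Trigraph V'} {a b : V'} {Aι Bι : Type} {M : Aι → Bι → ℤ}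
  {hne : a ≠ b} {h0 : G'.θ a b = 0}
  {hMr : ∀ α β, M α β = 1 ∨ M α β = 0 ∨ M α β = -1}
  {hM0r : ∀ α β β', M α β = 0 → M α β' = 0 → β = β'}
  {hM0l : ∀ α α' β, M α β = 0 → M α' β = 0 → α = α'}

local notation "H" => refT G' a b M hne h0 hMr hM0r hM0l

lemma theta_inl (u : {v : V' // v ≠ a ∧ v ≠ b}) (p : RefV V' a b Aι Bι) :
    refθ G' a b M (Sum.inl u) p = G'.θ u.1 (refρ a b p) := by
  rcases p with v | α | β <;> rfl

variable {P Q : Set (RefV V' a b Aι Bι)}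

section Partners

variable (hsc : (refT G' a b M hne h0 hMr hM0r hM0l).SquareConnected P Q)

include hsc in
/-- the adjacent/antiadjacent partners in `Q` of an `A`-vertex of `P`, when `Q` misses
all class vertices, are old vertices giving `±1`. -/
lemma partnersA {α₁ : Aι} (hα₁ : Sum.inr (Sum.inl α₁) ∈ P)
    (hAQ : ∀ α : Aι, Sum.inr (Sum.inl α) ∉ Q) (hBQ : ∀ β : Bι, Sum.inr (Sum.inr β) ∉ Q) :
    ∃ wp wm : {v : V' // v ≠ a ∧ v ≠ b}, Sum.inl wp ∈ Q ∧ Sum.inl wm ∈ Q ∧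
      G'.θ a wp.1 = 1 ∧ G'.θ a wm.1 = -1 := by
  obtain ⟨p', q, q', hp', hq, hq', -, -, hadj, -, hanti, -⟩ := hsc.cross_at hα₁
  rcases q with wp | α | β
  · rcases q' with wm | α | β
    · refine ⟨wp, wm, hq, hq', ?_, ?_⟩
      · have h1 : G'.θ a wp.1 ≠ -1 := by simpa [refθ] using hadj.ne_neg
        have h2 := theta_a_ne G' a b hne h0 wp.2.1 wp.2.2
        rcases G'.range_mem a wp.1 with h | h | h
        exacts [h, absurd h h2, absurd h h1]
      · have h1 : G'.θ a wm.1 ≠ 1 := by simpa [refθ] using hanti.ne_one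
        have h2 := theta_a_ne G' a b hne h0 wm.2.1 wm.2.2
        rcases G'.range_mem a wm.1 with h | h | h
        exacts [absurd h h1, absurd h h2, h]
    · exact absurd hq' (hAQ α)
    · exact absurd hq' (hBQ β)
  · exact absurd hq (hAQ α)
  · exact absurd hq (hBQ β)

include hsc in
lemma partnersB {β₁ : Bι} (hβ₁ : Sum.inr (Sum.inr β₁) ∈ P)
    (hAQ : ∀ α : Aι, Sum.inr (Sum.inl α) ∉ Q) (hBQ : ∀ β : Bι, Sum.inr (Sum.inr β) ∉ Q) :
    ∃ wp wm : {v : V' // v ≠ a ∧ v ≠ b}, Sum.inl wp ∈ Q ∧ Sum.inl wm ∈ Q ∧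
      G'.θ b wp.1 = 1 ∧ G'.θ b wm.1 = -1 := by
  obtain ⟨p', q, q', hp', hq, hq', -, -, hadj, -, hanti, -⟩ := hsc.cross_at hβ₁
  rcases q with wp | α | β
  · rcases q' with wm | α | β
    · refine ⟨wp, wm, hq, hq', ?_, ?_⟩
      · have h1 : G'.θ b wp.1 ≠ -1 := by simpa [refθ] using hadj.ne_neg
        have h2 := theta_b_ne G' a b hne h0 wp.2.1 wp.2.2
        rcases G'.range_mem b wp.1 with h | h | h
        exacts [h, absurd h h2, absurd h h1]
      · have h1 : G'.θ b wm.1 ≠ 1 := by simpa [refθ] using hanti.ne_one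
        have h2 := theta_b_ne G' a b hne h0 wm.2.1 wm.2.2
        rcases G'.range_mem b wm.1 with h | h | h
        exacts [absurd h h1, absurd h h2, h]
    · exact absurd hq' (hAQ α)
    · exact absurd hq' (hBQ β)
  · exact absurd hq (hAQ α)
  · exact absurd hq (hBQ β)

include hsc in
/-- if some `A`-vertex is in `P` and no class vertex is in `Q`, then all `A`-vertices
are in `P`. -/
lemma A_sub {α₁ : Aι} (hα₁ : Sum.inr (Sum.inl α₁) ∈ P)
    (hAQ : ∀ α : Aι, Sum.inr (Sum.inl α) ∉ Q) (hBQ : ∀ β : Bι, Sum.inr (Sum.inr β) ∉ Q) :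
    ∀ α : Aι, Sum.inr (Sum.inl α) ∈ P := by
  obtain ⟨wp, wm, hwp, hwm, h1, h2⟩ := partnersA hsc hα₁ hAQ hBQ
  intro α
  by_contra hα
  have hout : Sum.inr (Sum.inl α) ∉ P ∪ Q := by
    rintro (h | h)
    exacts [hα h, hAQ α h]
  obtain ⟨-, h2'⟩ := hsc.1.2.2.2.2.2.2 _ hout
  rcases h2' with hcc | haa
  · have := hcc _ rfl _ hwm
    simp only [StrongAdj, refT_theta, refθ] at this
    rw [h2] at this
    exact absurd this (by decide)
  · have := haa _ rfl _ hwp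
    simp only [StrongAntiAdj, refT_theta, refθ] at this
    rw [h1] at this
    exact absurd this (by decide)

include hsc in
lemma B_sub {β₁ : Bι} (hβ₁ : Sum.inr (Sum.inr β₁) ∈ P)
    (hAQ : ∀ α : Aι, Sum.inr (Sum.inl α) ∉ Q) (hBQ : ∀ β : Bι, Sum.inr (Sum.inr β) ∉ Q) :
    ∀ β : Bι, Sum.inr (Sum.inr β) ∈ P := by
  obtain ⟨wp, wm, hwp, hwm, h1, h2⟩ := partnersB hsc hβ₁ hAQ hBQ
  intro β
  by_contra hβ
  have hout : Sum.inr (Sum.inr β) ∉ P ∪ Q := by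
    rintro (h | h)
    exacts [hβ h, hBQ β h]
  obtain ⟨-, h2'⟩ := hsc.1.2.2.2.2.2.2 _ hout
  rcases h2' with hcc | haa
  · have := hcc _ rfl _ hwm
    simp only [StrongAdj, refT_theta, refθ] at this
    rw [h2] at this
    exact absurd this (by decide)
  · have := haa _ rfl _ hwp
    simp only [StrongAntiAdj, refT_theta, refθ] at this
    rw [h1] at this
    exact absurd this (by decide)

end Partners

section O2

variable (hNoSq : ∀ α α' β β', α ≠ α' → β ≠ β' → M α β ≠ 1 → M α' β' ≠ 1 →
    M α' β ≠ -1 → M α β' ≠ -1 → False)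
  (hsc : (refT G' a b M hne h0 hMr hM0r hM0l).SquareConnected P Q)

include hNoSq hsc in
/-- `A`-vertices cannot appear in both `P` and `Q`. -/
lemma O2A {α α' : Aι} (hα : Sum.inr (Sum.inl α) ∈ P) (hα' : Sum.inr (Sum.inl α') ∈ Q) :
    False := by
  have hdj := hsc.1.2.2.1
  have hclP := hsc.1.2.2.2.1
  have hclQ := hsc.1.2.2.2.2.1
  have hαα : α ≠ α' := by
    intro hh
    subst hh
    exact hdj.ne_of_mem hα hα' rfl
  obtain ⟨p2, qx, qx', hp2, hqx, hqx', -, -, -, -, hanti2, -⟩ := hsc.cross_at hα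
  obtain ⟨p3, qy, qy', hp3, hqy, hqy', -, -, -, -, hanti3, -⟩ := hsc.symm2.cross_at hα'
  -- hanti2 : AntiAdj (ιA α) qx',  qx' ∈ Q ; hanti3 : AntiAdj (ιA α') qy', qy' ∈ P
  rcases qx' with u | α2 | βQ
  · exact hanti2.ne_one (hclQ hα' hqx' (by simp))
  · have hne2 : α ≠ α2 := fun hh => hanti2.1 (by rw [hh])
    exact hanti2.ne_one (by simp [refθ, hne2])
  · rcases qy' with u | α3 | βP
    · exact hanti3.ne_one (hclP hα hqy' (by simp))
    · have hne3 : α' ≠ α3 := fun hh => hanti3.1 (by rw [hh])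
      exact hanti3.ne_one (by simp [refθ, hne3])
    · -- M α βQ ≠ 1, M α' βP ≠ 1, M α' βQ = 1, M α βP = 1
      have hm1 : M α βQ ≠ 1 := hanti2.ne_one
      have hm2 : M α' βP ≠ 1 := hanti3.ne_one
      have hm3 : M α' βQ = 1 := hclQ hα' hqx' (by simp)
      have hm4 : M α βP = 1 := hclP hα hqy' (by simp)
      have hββ : βQ ≠ βP := by
        intro hh
        subst hh
        exact hdj.ne_of_mem hqy' hqx' rfl
      exact hNoSq α α' βQ βP hαα hββ hm1 hm2 (by rw [hm3]; decide) (by rw [hm4]; decide)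

include hNoSq hsc in
lemma O2B {β β' : Bι} (hβ : Sum.inr (Sum.inr β) ∈ P) (hβ' : Sum.inr (Sum.inr β') ∈ Q) :
    False := by
  have hdj := hsc.1.2.2.1
  have hclP := hsc.1.2.2.2.1
  have hclQ := hsc.1.2.2.2.2.1
  have hββ : β ≠ β' := by
    intro hh
    subst hh
    exact hdj.ne_of_mem hβ hβ' rfl
  obtain ⟨p2, qx, qx', hp2, hqx, hqx', -, -, -, -, hanti2, -⟩ := hsc.cross_at hβ
  obtain ⟨p3, qy, qy', hp3, hqy, hqy', -, -, -, -, hanti3, -⟩ := hsc.symm2.cross_at hβ'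
  rcases qx' with u | αQ | β2
  · exact hanti2.ne_one (hclQ hβ' hqx' (by simp))
  · rcases qy' with u | αP | β3
    · exact hanti3.ne_one (hclP hβ hqy' (by simp))
    · -- M αQ β ≠ 1, M αP β' ≠ 1, M αQ β' = 1, M αP β = 1
      have hm1 : M αQ β ≠ 1 := hanti2.ne_one
      have hm2 : M αP β' ≠ 1 := hanti3.ne_one
      have hm3 : M αQ β' = 1 := hclQ hβ' hqx' (by simp)
      have hm4 : M αP β = 1 := hclP hβ hqy' (by simp)
      have hαα : αQ ≠ αP := by
        intro hh
        subst hh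
        exact hdj.ne_of_mem hqy' hqx' rfl
      exact hNoSq αQ αP β β' hαα hββ hm1 hm2 (by rw [hm4]; decide) (by rw [hm3]; decide)
    · have hne3 : β' ≠ β3 := fun hh => hanti3.1 (by rw [hh])
      exact hanti3.ne_one (by simp [refθ, hne3])
  · have hne2 : β ≠ β2 := fun hh => hanti2.1 (by rw [hh])
    exact hanti2.ne_one (by simp [refθ, hne2])

end O2
end GTLlam3
end Trigraph

namespace Trigraph
section GTLlam4

variable {V' : Type} {G' : Trigraph V'} {a b : V'} {Aι Bι : Type} {M : Aι → Bι → ℤ}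
  {hne : a ≠ b} {h0 : G'.θ a b = 0}
  {hMr : ∀ α β, M α β = 1 ∨ M α β = 0 ∨ M α β = -1}
  {hM0r : ∀ α β β', M α β = 0 → M α β' = 0 → β = β'}
  {hM0l : ∀ α α' β, M α β = 0 → M α' β = 0 → α = α'}
  {P Q : Set (RefV V' a b Aι Bι)}
  (hNoSq : ∀ α α' β β', α ≠ α' → β ≠ β' → M α β ≠ 1 → M α' β' ≠ 1 →
    M α' β ≠ -1 → M α β' ≠ -1 → False)
  (hMle : ∃ α β, M α β ≠ 1) (hMge : ∃ α β, M α β ≠ -1)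
  (hsc : (refT G' a b M hne h0 hMr hM0r hM0l).SquareConnected P Q)

include hNoSq hMle hMge hsc in
/-- the case where `A`-vertices appear in `P` only and `B`-vertices appear nowhere. -/
lemma caseA_only {α₁ : Aι} (hα₁ : Sum.inr (Sum.inl α₁) ∈ P)
    (hAQ : ∀ α : Aι, Sum.inr (Sum.inl α) ∉ Q)
    (hBP : ∀ β : Bι, Sum.inr (Sum.inr β) ∉ P)
    (hBQ : ∀ β : Bι, Sum.inr (Sum.inr β) ∉ Q) : False := by
  have hclP := hsc.1.2.2.2.1
  have hclQ := hsc.1.2.2.2.2.1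
  have hdj := hsc.1.2.2.1
  have hhom := hsc.1.2.2.2.2.2.2
  have hAP := A_sub hsc hα₁ hAQ hBQ
  have houtβ : ∀ β : Bι, Sum.inr (Sum.inr β) ∉ P ∪ Q := by
    intro β
    rintro (h | h)
    exacts [hBP β h, hBQ β h]
  by_cases hP0 : ∃ u, Sum.inl u ∈ P
  · obtain ⟨w₀, hw₀⟩ := hP0
    have hbz := theta_b_ne G' a b hne h0 w₀.2.1 w₀.2.2
    obtain ⟨αl, βl, hl⟩ := hMle
    obtain ⟨αg, βg, hg⟩ := hMge
    rcases G'.range_mem b w₀.1 with hb | hb | hb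
    · obtain ⟨h1', -⟩ := hhom _ (houtβ βl)
      rcases h1' with hcc | haa
      · exact hl (hcc _ rfl _ (hAP αl))
      · have := haa _ rfl _ hw₀
        simp only [StrongAntiAdj, refT_theta, refθ] at this
        rw [hb] at this
        exact absurd this (by decide)
    · exact hbz hb
    · obtain ⟨h1', -⟩ := hhom _ (houtβ βg)
      rcases h1' with hcc | haa
      · have := hcc _ rfl _ hw₀
        simp only [StrongAdj, refT_theta, refθ] at this
        rw [hb] at this
        exact absurd this (by decide)
      · exact hg (haa _ rfl _ (hAP αg))
  · push_neg at hP0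
    obtain ⟨v1, v2, v3, v4, hsq, hsub⟩ := hsc.exists_square
    obtain ⟨p, p', q, q', hp, hp', -, -, hpp, -, -, -, -, -, -, hmp, hmp', -, -⟩ :=
      cross_of_square hclP hclQ hdj hsq hsub
    rcases p with u | αp | βp
    · exact hP0 u hp
    · rcases p' with u' | αp' | βp'
      · exact hP0 u' hp'
      · exact noTwoA hNoSq hsq hmp hmp' (fun hh => hpp (by rw [hh]))
      · exact hBP βp' hp'
    · exact hBP βp hp

include hNoSq hMle hMge hsc in
/-- the case where `B`-vertices appear in `P` only and `A`-vertices appear nowhere. -/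
lemma caseB_only {β₁ : Bι} (hβ₁ : Sum.inr (Sum.inr β₁) ∈ P)
    (hBQ : ∀ β : Bι, Sum.inr (Sum.inr β) ∉ Q)
    (hAP : ∀ α : Aι, Sum.inr (Sum.inl α) ∉ P)
    (hAQ : ∀ α : Aι, Sum.inr (Sum.inl α) ∉ Q) : False := by
  have hclP := hsc.1.2.2.2.1
  have hclQ := hsc.1.2.2.2.2.1
  have hdj := hsc.1.2.2.1
  have hhom := hsc.1.2.2.2.2.2.2
  have hBPall := B_sub hsc hβ₁ hAQ hBQ
  have houtα : ∀ α : Aι, Sum.inr (Sum.inl α) ∉ P ∪ Q := by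
    intro α
    rintro (h | h)
    exacts [hAP α h, hAQ α h]
  by_cases hP0 : ∃ u, Sum.inl u ∈ P
  · obtain ⟨w₀, hw₀⟩ := hP0
    have haz := theta_a_ne G' a b hne h0 w₀.2.1 w₀.2.2
    obtain ⟨αl, βl, hl⟩ := hMle
    obtain ⟨αg, βg, hg⟩ := hMge
    rcases G'.range_mem a w₀.1 with hb | hb | hb
    · obtain ⟨h1', -⟩ := hhom _ (houtα αl)
      rcases h1' with hcc | haa
      · exact hl (hcc _ rfl _ (hBPall βl))
      · have := haa _ rfl _ hw₀
        simp only [StrongAntiAdj, refT_theta, refθ] at this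
        rw [hb] at this
        exact absurd this (by decide)
    · exact haz hb
    · obtain ⟨h1', -⟩ := hhom _ (houtα αg)
      rcases h1' with hcc | haa
      · have := hcc _ rfl _ hw₀
        simp only [StrongAdj, refT_theta, refθ] at this
        rw [hb] at this
        exact absurd this (by decide)
      · exact hg (haa _ rfl _ (hBPall βg))
  · push_neg at hP0
    obtain ⟨v1, v2, v3, v4, hsq, hsub⟩ := hsc.exists_square
    obtain ⟨p, p', q, q', hp, hp', -, -, hpp, -, -, -, -, -, -, hmp, hmp', -, -⟩ :=
      cross_of_square hclP hclQ hdj hsq hsub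
    rcases p with u | αp | βp
    · exact hP0 u hp
    · exact hAP αp hp
    · rcases p' with u' | αp' | βp'
      · exact hP0 u' hp'
      · exact hAP αp' hp'
      · exact noTwoB hNoSq hsq hmp hmp' (fun hh => hpp (by rw [hh]))

include hMle hsc in
/-- the case where both an `A`-vertex and a `B`-vertex appear in `P`, with `Q` free of
class vertices. -/
lemma case_same {α₁ : Aι} {β₁ : Bι}
    (hα₁ : Sum.inr (Sum.inl α₁) ∈ P) (hβ₁ : Sum.inr (Sum.inr β₁) ∈ P)
    (hAQ : ∀ α : Aι, Sum.inr (Sum.inl α) ∉ Q)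
    (hBQ : ∀ β : Bι, Sum.inr (Sum.inr β) ∉ Q) : False := by
  have hclP := hsc.1.2.2.2.1
  have hAP := A_sub hsc hα₁ hAQ hBQ
  have hBPall := B_sub hsc hβ₁ hAQ hBQ
  obtain ⟨αl, βl, hl⟩ := hMle
  exact hl (hclP (hAP αl) (hBPall βl) (by simp))

end GTLlam4
end Trigraph

namespace Trigraph
section GTLlam5

variable {V' : Type} {G' : Trigraph V'} {a b : V'} {Aι Bι : Type} {M : Aι → Bι → ℤ}
  {hne : a ≠ b} {h0 : G'.θ a b = 0}
  {hMr : ∀ α β, M α β = 1 ∨ M α β = 0 ∨ M α β = -1}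
  {hM0r : ∀ α β β', M α β = 0 → M α β' = 0 → β = β'}
  {hM0l : ∀ α α' β, M α β = 0 → M α' β = 0 → α = α'}
  {P Q : Set (RefV V' a b Aι Bι)}

lemma clique_image_P (hcl : (refT G' a b M hne h0 hMr hM0r hM0l).IsStrongClique P)
    (hBP : ∀ β : Bι, Sum.inr (Sum.inr β) ∉ P) :
    G'.IsStrongClique (refρ a b '' P) := by
  rintro x ⟨p, hp, rfl⟩ y ⟨p', hp', rfl⟩ hxy
  have hpp' : p ≠ p' := fun h => hxy (by rw [h])
  have h1 := hcl hp hp' hpp'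
  rcases p with u | αp | βp
  · rcases p' with u' | αp' | βp'
    · exact h1
    · exact h1
    · exact absurd hp' (hBP βp')
  · rcases p' with u' | αp' | βp'
    · exact h1
    · exact absurd rfl hxy
    · exact absurd hp' (hBP βp')
  · exact absurd hp (hBP βp)

lemma clique_image_Q (hcl : (refT G' a b M hne h0 hMr hM0r hM0l).IsStrongClique Q)
    (hAQ : ∀ α : Aι, Sum.inr (Sum.inl α) ∉ Q) :
    G'.IsStrongClique (refρ a b '' Q) := by
  rintro x ⟨p, hp, rfl⟩ y ⟨p', hp', rfl⟩ hxy
  have hpp' : p ≠ p' := fun h => hxy (by rw [h])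
  have h1 := hcl hp hp' hpp'
  rcases p with u | αp | βp
  · rcases p' with u' | αp' | βp'
    · exact h1
    · exact absurd hp' (hAQ αp')
    · exact h1
  · exact absurd hp (hAQ αp)
  · rcases p' with u' | αp' | βp'
    · exact h1
    · exact absurd hp' (hAQ αp')
    · exact absurd rfl hxy

lemma disj_image (hdj : Disjoint P Q) (hane : a ≠ b)
    (hAQ : ∀ α : Aι, Sum.inr (Sum.inl α) ∉ Q) (hBP : ∀ β : Bι, Sum.inr (Sum.inr β) ∉ P) :
    Disjoint (refρ a b '' P) (refρ a b '' Q) := by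
  rw [Set.disjoint_left]
  rintro x ⟨p, hp, rfl⟩ ⟨q, hq, hqx⟩
  rcases p with u | αp | βp <;> rcases q with u' | αq | βq <;> simp only [refρ] at hqx
  · have : u' = u := Subtype.ext hqx
    subst this
    exact Set.disjoint_left.1 hdj hp hq
  · exact u.2.1 hqx.symm
  · exact u.2.2 hqx.symm
  · exact u'.2.1 hqx
  · exact hAQ αq hq
  · exact hane hqx.symm
  · exact u'.2.2 hqx
  · exact hane hqx
  · exact hBP βp hp

variable (hNoSq : ∀ α α' β β', α ≠ α' → β ≠ β' → M α β ≠ 1 → M α' β' ≠ 1 →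
    M α' β ≠ -1 → M α β' ≠ -1 → False)
  (hsc : (refT G' a b M hne h0 hMr hM0r hM0l).SquareConnected P Q)

include hNoSq hsc in
lemma lift_partition {X Y : Set V'} (hX : X.Nonempty) (hY : Y.Nonempty)
    (hu : X ∪ Y = refρ a b '' P) (hdxy : Disjoint X Y) :
    G'.SquareMeets (refρ a b '' P ∪ refρ a b '' Q) X Y := by
  have hun : {p | p ∈ P ∧ refρ a b p ∈ X} ∪ {p | p ∈ P ∧ refρ a b p ∈ Y} = P := by
    ext p
    simp only [Set.mem_union, Set.mem_setOf_eq]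
    constructor
    · rintro (⟨h, -⟩ | ⟨h, -⟩) <;> exact h
    · intro hp
      have hm : refρ a b p ∈ X ∪ Y := by
        rw [hu]; exact ⟨p, hp, rfl⟩
      rcases hm with h | h
      exacts [Or.inl ⟨hp, h⟩, Or.inr ⟨hp, h⟩]
  have hne1 : {p | p ∈ P ∧ refρ a b p ∈ X}.Nonempty := by
    obtain ⟨x, hx⟩ := hX
    have hx' : x ∈ refρ a b '' P := by rw [← hu]; exact Or.inl hx
    obtain ⟨p, hp, rfl⟩ := hx'
    exact ⟨p, hp, hx⟩
  have hne2 : {p | p ∈ P ∧ refρ a b p ∈ Y}.Nonempty := by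
    obtain ⟨y, hy⟩ := hY
    have hy' : y ∈ refρ a b '' P := by rw [← hu]; exact Or.inr hy
    obtain ⟨p, hp, rfl⟩ := hy'
    exact ⟨p, hp, hy⟩
  have hdL : Disjoint {p | p ∈ P ∧ refρ a b p ∈ X} {p | p ∈ P ∧ refρ a b p ∈ Y} := by
    rw [Set.disjoint_left]
    rintro p ⟨-, h1⟩ ⟨-, h2⟩
    exact Set.disjoint_left.1 hdxy h1 h2
  obtain ⟨v1, v2, v3, v4, hsq, hsub, hm1, hm2⟩ := hsc.2.1 _ _ hne1 hne2 hun hdL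
  refine ⟨refρ a b v1, refρ a b v2, refρ a b v3, refρ a b v4,
    descend_square hNoSq hsq, ?_, ?_, ?_⟩
  · intro x hx
    simp only [Set.mem_insert_iff, Set.mem_singleton_iff] at hx
    have key : ∀ w, w ∈ ({v1, v2, v3, v4} : Set (RefV V' a b Aι Bι)) →
        refρ a b w ∈ refρ a b '' P ∪ refρ a b '' Q := by
      intro w hw
      rcases hsub hw with h | h
      exacts [Or.inl ⟨_, h, rfl⟩, Or.inr ⟨_, h, rfl⟩]
    rcases hx with rfl | rfl | rfl | rfl
    · exact key v1 (by simp)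
    · exact key v2 (by simp)
    · exact key v3 (by simp)
    · exact key v4 (by simp)
  · obtain ⟨w, hwS, hwL⟩ := hm1
    refine ⟨refρ a b w, ?_, hwL.2⟩
    simp only [Set.mem_insert_iff, Set.mem_singleton_iff] at hwS ⊢
    rcases hwS with rfl | rfl | rfl | rfl <;> tauto
  · obtain ⟨w, hwS, hwL⟩ := hm2
    refine ⟨refρ a b w, ?_, hwL.2⟩
    simp only [Set.mem_insert_iff, Set.mem_singleton_iff] at hwS ⊢
    rcases hwS with rfl | rfl | rfl | rfl <;> tauto

include hsc in
/-- outside-vertex homogeneity transfers down for old vertices -/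
lemma outside_transfer {v : V'} (hva : v ≠ a) (hvb : v ≠ b)
    (hout : (Sum.inl ⟨v, hva, hvb⟩ : RefV V' a b Aι Bι) ∉ P ∪ Q) :
    (G'.StronglyComplete {v} (refρ a b '' P) ∨
      G'.StronglyAnticomplete {v} (refρ a b '' P)) ∧
    (G'.StronglyComplete {v} (refρ a b '' Q) ∨
      G'.StronglyAnticomplete {v} (refρ a b '' Q)) := by
  obtain ⟨hsP, hsQ⟩ := hsc.1.2.2.2.2.2.2 _ hout
  constructor
  · rcases hsP with hcc | haa
    · left
      rintro x rfl y ⟨p, hp, rfl⟩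
      have h1 := hcc _ rfl _ hp
      simp only [StrongAdj, refT_theta, theta_inl] at h1
      exact h1
    · right
      rintro x rfl y ⟨p, hp, rfl⟩
      have h1 := haa _ rfl _ hp
      simp only [StrongAntiAdj, refT_theta, theta_inl] at h1
      exact h1
  · rcases hsQ with hcc | haa
    · left
      rintro x rfl y ⟨p, hp, rfl⟩
      have h1 := hcc _ rfl _ hp
      simp only [StrongAdj, refT_theta, theta_inl] at h1
      exact h1
    · right
      rintro x rfl y ⟨p, hp, rfl⟩
      have h1 := haa _ rfl _ hp
      simp only [StrongAntiAdj, refT_theta, theta_inl] at h1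
      exact h1

end GTLlam5
end Trigraph

namespace Trigraph
section GTLlam6

variable {V' : Type} {G' : Trigraph V'} {a b : V'} {Aι Bι : Type} {M : Aι → Bι → ℤ}
  {hne : a ≠ b} {h0 : G'.θ a b = 0}
  {hMr : ∀ α β, M α β = 1 ∨ M α β = 0 ∨ M α β = -1}
  {hM0r : ∀ α β β', M α β = 0 → M α β' = 0 → β = β'}
  {hM0l : ∀ α α' β, M α β = 0 → M α' β = 0 → α = α'}
  {P Q : Set (RefV V' a b Aι Bι)}
  (hNoSq : ∀ α α' β β', α ≠ α' → β ≠ β' → M α β ≠ 1 → M α' β' ≠ 1 →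
    M α' β ≠ -1 → M α β' ≠ -1 → False)
  (hsc : (refT G' a b M hne h0 hMr hM0r hM0l).SquareConnected P Q)
  (hL : G'.Laminar)

include hNoSq hsc hL in
/-- the case where no class vertex appears in `P ∪ Q`. -/
lemma case_none [Nonempty Aι] [Nonempty Bι]
    (hA : ∀ α : Aι, Sum.inr (Sum.inl α) ∉ P ∪ Q)
    (hB : ∀ β : Bι, Sum.inr (Sum.inr β) ∉ P ∪ Q) : False := by
  have hAP : ∀ α : Aι, Sum.inr (Sum.inl α) ∉ P := fun α h => hA α (Or.inl h)
  have hAQ : ∀ α : Aι, Sum.inr (Sum.inl α) ∉ Q := fun α h => hA α (Or.inr h)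
  have hBP : ∀ β : Bι, Sum.inr (Sum.inr β) ∉ P := fun β h => hB β (Or.inl h)
  have hBQ : ∀ β : Bι, Sum.inr (Sum.inr β) ∉ Q := fun β h => hB β (Or.inr h)
  have hallP : ∀ p ∈ P, ∃ u, p = Sum.inl u := by
    rintro (u | α | β) hp
    exacts [⟨u, rfl⟩, absurd hp (hAP α), absurd hp (hBP β)]
  have hallQ : ∀ p ∈ Q, ∃ u, p = Sum.inl u := by
    rintro (u | α | β) hp
    exacts [⟨u, rfl⟩, absurd hp (hAQ α), absurd hp (hBQ β)]
  have hhom := hsc.1.2.2.2.2.2.2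
  apply hL
  refine ⟨refρ a b '' P, refρ a b '' Q, ⟨⟨hsc.1.1.image _, hsc.1.2.1.image _,
    disj_image hsc.1.2.2.1 hne hAQ hBP, clique_image_P hsc.1.2.2.2.1 hBP,
    clique_image_Q hsc.1.2.2.2.2.1 hAQ, ?_, ?_⟩,
    fun X Y hX hY hu hd => lift_partition hNoSq hsc hX hY hu hd,
    fun X Y hX hY hu hd => ?_⟩⟩
  · -- not both singletons
    rintro ⟨x, y, hPx, hQy⟩
    obtain ⟨p₁, hp₁⟩ := hsc.1.1
    obtain ⟨u₁, rfl⟩ := hallP p₁ hp₁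
    obtain ⟨q₁, hq₁⟩ := hsc.1.2.1
    obtain ⟨w₁, rfl⟩ := hallQ q₁ hq₁
    have hx1 : u₁.1 = x := by
      have : u₁.1 ∈ refρ a b '' P := ⟨_, hp₁, rfl⟩
      rwa [hPx, Set.mem_singleton_iff] at this
    have hy1 : w₁.1 = y := by
      have : w₁.1 ∈ refρ a b '' Q := ⟨_, hq₁, rfl⟩
      rwa [hQy, Set.mem_singleton_iff] at this
    refine hsc.1.2.2.2.2.2.1 ⟨Sum.inl u₁, Sum.inl w₁, ?_, ?_⟩
    · ext p
      simp only [Set.mem_singleton_iff]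
      constructor
      · intro hp
        obtain ⟨u, rfl⟩ := hallP p hp
        have hux : u.1 = x := by
          have : u.1 ∈ refρ a b '' P := ⟨_, hp, rfl⟩
          rwa [hPx, Set.mem_singleton_iff] at this
        have : u = u₁ := Subtype.ext (by rw [hux, ← hx1])
        rw [this]
      · rintro rfl
        exact hp₁
    · ext p
      simp only [Set.mem_singleton_iff]
      constructor
      · intro hp
        obtain ⟨u, rfl⟩ := hallQ p hp
        have hux : u.1 = y := by
          have : u.1 ∈ refρ a b '' Q := ⟨_, hp, rfl⟩
          rwa [hQy, Set.mem_singleton_iff] at this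
        have : u = w₁ := Subtype.ext (by rw [hux, ← hy1])
        rw [this]
      · rintro rfl
        exact hq₁
  · -- homogeneity
    intro v hv
    rcases eq_or_ne v a with rfl | hva
    · obtain ⟨α₀⟩ := ‹Nonempty Aι›
      obtain ⟨hsP, hsQ⟩ := hhom _ (hA α₀)
      constructor
      · rcases hsP with hcc | haa
        · left
          rintro x rfl y ⟨p, hp, rfl⟩
          obtain ⟨u, rfl⟩ := hallP p hp
          exact hcc _ rfl _ hp
        · right
          rintro x rfl y ⟨p, hp, rfl⟩
          obtain ⟨u, rfl⟩ := hallP p hp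
          exact haa _ rfl _ hp
      · rcases hsQ with hcc | haa
        · left
          rintro x rfl y ⟨p, hp, rfl⟩
          obtain ⟨u, rfl⟩ := hallQ p hp
          exact hcc _ rfl _ hp
        · right
          rintro x rfl y ⟨p, hp, rfl⟩
          obtain ⟨u, rfl⟩ := hallQ p hp
          exact haa _ rfl _ hp
    · rcases eq_or_ne v b with rfl | hvb
      · obtain ⟨β₀⟩ := ‹Nonempty Bι›
        obtain ⟨hsP, hsQ⟩ := hhom _ (hB β₀)
        constructor
        · rcases hsP with hcc | haa
          · left
            rintro x rfl y ⟨p, hp, rfl⟩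
            obtain ⟨u, rfl⟩ := hallP p hp
            exact hcc _ rfl _ hp
          · right
            rintro x rfl y ⟨p, hp, rfl⟩
            obtain ⟨u, rfl⟩ := hallP p hp
            exact haa _ rfl _ hp
        · rcases hsQ with hcc | haa
          · left
            rintro x rfl y ⟨p, hp, rfl⟩
            obtain ⟨u, rfl⟩ := hallQ p hp
            exact hcc _ rfl _ hp
          · right
            rintro x rfl y ⟨p, hp, rfl⟩
            obtain ⟨u, rfl⟩ := hallQ p hp
            exact haa _ rfl _ hp
      · have hout : (Sum.inl ⟨v, hva, hvb⟩ : RefV V' a b Aι Bι) ∉ P ∪ Q := by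
          rintro (h | h)
          · exact hv (Or.inl ⟨_, h, rfl⟩)
          · exact hv (Or.inr ⟨_, h, rfl⟩)
        exact outside_transfer hsc hva hvb hout
  · have h1 := lift_partition hNoSq hsc.symm2 hX hY hu hd
    rwa [Set.union_comm] at h1

include hNoSq hsc hL in
/-- the case where an `A`-vertex appears in `P` and a `B`-vertex appears in `Q`. -/
lemma case_cross {α₁ : Aι} {β₁ : Bι}
    (hα₁ : Sum.inr (Sum.inl α₁) ∈ P) (hβ₁ : Sum.inr (Sum.inr β₁) ∈ Q)
    (hAQ : ∀ α : Aι, Sum.inr (Sum.inl α) ∉ Q)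
    (hBP : ∀ β : Bι, Sum.inr (Sum.inr β) ∉ P) : False := by
  apply hL
  refine ⟨refρ a b '' P, refρ a b '' Q, ⟨⟨hsc.1.1.image _, hsc.1.2.1.image _,
    disj_image hsc.1.2.2.1 hne hAQ hBP, clique_image_P hsc.1.2.2.2.1 hBP,
    clique_image_Q hsc.1.2.2.2.2.1 hAQ, ?_, ?_⟩,
    fun X Y hX hY hu hd => lift_partition hNoSq hsc hX hY hu hd,
    fun X Y hX hY hu hd => ?_⟩⟩
  · -- not both singletons
    rintro ⟨x, y, hPx, hQy⟩
    have hax : a = x := by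
      have : a ∈ refρ a b '' P := ⟨_, hα₁, rfl⟩
      rwa [hPx, Set.mem_singleton_iff] at this
    have hby : b = y := by
      have : b ∈ refρ a b '' Q := ⟨_, hβ₁, rfl⟩
      rwa [hQy, Set.mem_singleton_iff] at this
    have hP0 : ∀ u, Sum.inl u ∉ P := by
      intro u hu
      have : u.1 = x := by
        have : u.1 ∈ refρ a b '' P := ⟨_, hu, rfl⟩
        rwa [hPx, Set.mem_singleton_iff] at this
      exact u.2.1 (this.trans hax.symm)
    obtain ⟨v1, v2, v3, v4, hsq, hsub⟩ := hsc.exists_square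
    obtain ⟨p, p', q, q', hp, hp', -, -, hpp, -, -, -, -, -, -, hmp, hmp', -, -⟩ :=
      cross_of_square hsc.1.2.2.2.1 hsc.1.2.2.2.2.1 hsc.1.2.2.1 hsq hsub
    rcases p with u | αp | βp
    · exact hP0 u hp
    · rcases p' with u' | αp' | βp'
      · exact hP0 u' hp'
      · exact noTwoA hNoSq hsq hmp hmp' (fun hh => hpp (by rw [hh]))
      · exact hBP βp' hp'
    · exact hBP βp hp
  · -- homogeneity
    intro v hv
    have hva : v ≠ a := by
      rintro rfl
      exact hv (Or.inl ⟨_, hα₁, rfl⟩)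
    have hvb : v ≠ b := by
      rintro rfl
      exact hv (Or.inr ⟨_, hβ₁, rfl⟩)
    have hout : (Sum.inl ⟨v, hva, hvb⟩ : RefV V' a b Aι Bι) ∉ P ∪ Q := by
      rintro (h | h)
      · exact hv (Or.inl ⟨_, h, rfl⟩)
      · exact hv (Or.inr ⟨_, h, rfl⟩)
    exact outside_transfer hsc hva hvb hout
  · have h1 := lift_partition hNoSq hsc.symm2 hX hY hu hd
    rwa [Set.union_comm] at h1

end GTLlam6

section GTLmaster

variable {V' : Type} (G' : Trigraph V') (a b : V') {Aι Bι : Type} (M : Aι → Bι → ℤ)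
  (hne : a ≠ b) (h0 : G'.θ a b = 0)
  (hMr : ∀ α β, M α β = 1 ∨ M α β = 0 ∨ M α β = -1)
  (hM0r : ∀ α β β', M α β = 0 → M α β' = 0 → β = β')
  (hM0l : ∀ α α' β, M α β = 0 → M α' β = 0 → α = α')

include hne h0 in
theorem refT_laminar [Nonempty Aι] [Nonempty Bι] (hL : G'.Laminar)
    (hNoSq : ∀ α α' β β', α ≠ α' → β ≠ β' → M α β ≠ 1 → M α' β' ≠ 1 →
      M α' β ≠ -1 → M α β' ≠ -1 → False)
    (hMle : ∃ α β, M α β ≠ 1) (hMge : ∃ α β, M α β ≠ -1) :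
    (refT G' a b M hne h0 hMr hM0r hM0l).Laminar := by
  rintro ⟨P, Q, hsc⟩
  by_cases hAP : ∃ α, Sum.inr (Sum.inl α) ∈ P
  · obtain ⟨α₁, hα₁⟩ := hAP
    have hAQ : ∀ α, Sum.inr (Sum.inl α) ∉ Q := fun α h => O2A hNoSq hsc hα₁ h
    by_cases hBP : ∃ β, Sum.inr (Sum.inr β) ∈ P
    · obtain ⟨β₁, hβ₁⟩ := hBP
      have hBQ : ∀ β, Sum.inr (Sum.inr β) ∉ Q := fun β h => O2B hNoSq hsc hβ₁ h
      exact case_same hMle hsc hα₁ hβ₁ hAQ hBQ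
    · by_cases hBQ : ∃ β, Sum.inr (Sum.inr β) ∈ Q
      · obtain ⟨β₁, hβ₁⟩ := hBQ
        exact case_cross hNoSq hsc hL hα₁ hβ₁ hAQ (fun β h => hBP ⟨β, h⟩)
      · exact caseA_only hNoSq hMle hMge hsc hα₁ hAQ (fun β h => hBP ⟨β, h⟩)
          (fun β h => hBQ ⟨β, h⟩)
  · by_cases hAQ : ∃ α, Sum.inr (Sum.inl α) ∈ Q
    · obtain ⟨α₁, hα₁⟩ := hAQ
      have hAP' : ∀ α, Sum.inr (Sum.inl α) ∉ P := fun α h => hAP ⟨α, h⟩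
      by_cases hBQ : ∃ β, Sum.inr (Sum.inr β) ∈ Q
      · obtain ⟨β₁, hβ₁⟩ := hBQ
        have hBP : ∀ β, Sum.inr (Sum.inr β) ∉ P := fun β h => O2B hNoSq hsc h hβ₁
        exact case_same hMle hsc.symm2 hα₁ hβ₁ hAP' hBP
      · by_cases hBP : ∃ β, Sum.inr (Sum.inr β) ∈ P
        · obtain ⟨β₁, hβ₁⟩ := hBP
          exact case_cross hNoSq hsc.symm2 hL hα₁ hβ₁ hAP' (fun β h => hBQ ⟨β, h⟩)
        · exact caseA_only hNoSq hMle hMge hsc.symm2 hα₁ hAP' (fun β h => hBQ ⟨β, h⟩)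
            (fun β h => hBP ⟨β, h⟩)
    · by_cases hBP : ∃ β, Sum.inr (Sum.inr β) ∈ P
      · obtain ⟨β₁, hβ₁⟩ := hBP
        have hBQ : ∀ β, Sum.inr (Sum.inr β) ∉ Q := fun β h => O2B hNoSq hsc hβ₁ h
        exact caseB_only hNoSq hMle hMge hsc hβ₁ hBQ (fun α h => hAP ⟨α, h⟩)
          (fun α h => hAQ ⟨α, h⟩)
      · by_cases hBQ : ∃ β, Sum.inr (Sum.inr β) ∈ Q
        · obtain ⟨β₁, hβ₁⟩ := hBQ
          exact caseB_only hNoSq hMle hMge hsc.symm2 hβ₁ (fun β h => hBP ⟨β, h⟩)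
            (fun α h => hAQ ⟨α, h⟩) (fun α h => hAP ⟨α, h⟩)
        · exact case_none hNoSq hsc hL
            (fun α => by rintro (h | h); exacts [hAP ⟨α, h⟩, hAQ ⟨α, h⟩])
            (fun β => by rintro (h | h); exacts [hBP ⟨β, h⟩, hBQ ⟨β, h⟩])

end GTLmaster
end Trigraph

namespace Trigraph

variable {V V' : Type}

lemma StronglyComplete.mono {G : Trigraph V} {X Y X' Y' : Set V}
    (h : G.StronglyComplete X Y) (hX : X' ⊆ X) (hY : Y' ⊆ Y) :
    G.StronglyComplete X' Y' := fun u hu v hv => h u (hX hu) v (hY hv)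

lemma StronglyAnticomplete.mono {G : Trigraph V} {X Y X' Y' : Set V}
    (h : G.StronglyAnticomplete X Y) (hX : X' ⊆ X) (hY : Y' ⊆ Y) :
    G.StronglyAnticomplete X' Y' := fun u hu v hv => h u (hX hu) v (hY hv)

lemma StronglyComplete.symm2 {G : Trigraph V} {X Y : Set V}
    (h : G.StronglyComplete X Y) : G.StronglyComplete Y X := by
  intro u hu v hv
  have := h v hv u hu
  unfold StrongAdj at this ⊢
  rwa [G.symm]

lemma StronglyAnticomplete.symm2 {G : Trigraph V} {X Y : Set V}
    (h : G.StronglyAnticomplete X Y) : G.StronglyAnticomplete Y X := by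
  intro u hu v hv
  have := h v hv u hu
  unfold StrongAntiAdj at this ⊢
  rwa [G.symm]

lemma IsStrongClique.subset {G : Trigraph V} {K K' : Set V}
    (h : G.IsStrongClique K) (hs : K' ⊆ K) : G.IsStrongClique K' :=
  Set.Pairwise.mono hs h

/-- the class map of the refinement -/
def refJ (I : V' → Set V) {a b : V'} {Aι Bι : Type} (KA : Aι → Set V) (KB : Bι → Set V) :
    RefV V' a b Aι Bι → Set V
  | .inl v => I v.1
  | .inr (.inl α) => KA α
  | .inr (.inr β) => KB β

section ThickTransfer

variable (G : Trigraph V) (G' : Trigraph V') (I : V' → Set V)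
  (a b : V') {Aι Bι : Type} (M : Aι → Bι → ℤ)
  (hne : a ≠ b) (h0 : G'.θ a b = 0)
  (hMr : ∀ α β, M α β = 1 ∨ M α β = 0 ∨ M α β = -1)
  (hM0r : ∀ α β β', M α β = 0 → M α β' = 0 → β = β')
  (hM0l : ∀ α α' β, M α β = 0 → M α' β = 0 → α = α')
  (KA : Aι → Set V) (KB : Bι → Set V)

theorem refT_thickening (hthick : G.IsThickening G' I)
    (hKAne : ∀ α, (KA α).Nonempty) (hKBne : ∀ β, (KB β).Nonempty)
    (hKAsub : ∀ α, KA α ⊆ I a) (hKBsub : ∀ β, KB β ⊆ I b)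
    (hKAdisj : ∀ α α', α ≠ α' → Disjoint (KA α) (KA α'))
    (hKBdisj : ∀ β β', β ≠ β' → Disjoint (KB β) (KB β'))
    (hKAcover : I a ⊆ ⋃ α, KA α) (hKBcover : I b ⊆ ⋃ β, KB β)
    (hrel1 : ∀ α β, M α β = 1 → G.StronglyComplete (KA α) (KB β))
    (hrelm : ∀ α β, M α β = -1 → G.StronglyAnticomplete (KA α) (KB β))
    (hrel0 : ∀ α β, M α β = 0 →
      ¬G.StronglyComplete (KA α) (KB β) ∧ ¬G.StronglyAnticomplete (KA α) (KB β)) :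
    G.IsThickening (refT G' a b M hne h0 hMr hM0r hM0l) (refJ I KA KB) := by
  obtain ⟨hcl, hdisj, hcover, hrel⟩ := hthick
  refine ⟨?_, ?_, ?_, ?_⟩
  · rintro (v | α | β)
    · exact hcl v.1
    · exact ⟨hKAne α, ((hcl a).2).subset (hKAsub α)⟩
    · exact ⟨hKBne β, ((hcl b).2).subset (hKBsub β)⟩
  · rintro (v | α | β) (w | α' | β') huv <;> simp only [refJ]
    · exact hdisj v.1 w.1 (fun hh => huv (by rw [Subtype.ext hh]))
    · exact (hdisj v.1 a v.2.1).mono_right (hKAsub α')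
    · exact (hdisj v.1 b v.2.2).mono_right (hKBsub β')
    · exact (hdisj a w.1 (Ne.symm w.2.1)).mono_left (hKAsub α)
    · exact hKAdisj α α' (fun hh => huv (by rw [hh]))
    · exact ((hdisj a b hne).mono (hKAsub α) (hKBsub β'))
    · exact (hdisj b w.1 (Ne.symm w.2.2)).mono_left (hKBsub β)
    · exact ((hdisj b a hne.symm).mono (hKBsub β) (hKAsub α'))
    · exact hKBdisj β β' (fun hh => huv (by rw [hh]))
  · rw [Set.eq_univ_iff_forall]
    intro x
    have hx : x ∈ ⋃ v, I v := by rw [hcover]; trivial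
    obtain ⟨s, ⟨v, rfl⟩, hxs⟩ := hx
    rcases eq_or_ne v a with rfl | hva
    · obtain ⟨s, ⟨α, rfl⟩, hxα⟩ := hKAcover hxs
      exact Set.mem_iUnion.2 ⟨Sum.inr (Sum.inl α), hxα⟩
    · rcases eq_or_ne v b with rfl | hvb
      · obtain ⟨s, ⟨β, rfl⟩, hxβ⟩ := hKBcover hxs
        exact Set.mem_iUnion.2 ⟨Sum.inr (Sum.inr β), hxβ⟩
      · exact Set.mem_iUnion.2 ⟨Sum.inl ⟨v, hva, hvb⟩, hxs⟩
  · rintro (v | α | β) (w | α' | β') huv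
    · -- inl inl
      have hvw : v.1 ≠ w.1 := fun hh => huv (by rw [Subtype.ext hh])
      refine ⟨fun h => (hrel v.1 w.1 hvw).1 h, fun h => (hrel v.1 w.1 hvw).2.1 h,
        fun h => (hrel v.1 w.1 hvw).2.2 ⟨hvw, h.2⟩⟩
    · -- inl, A
      refine ⟨fun h => ((hrel v.1 a v.2.1).1 h).mono (le_refl _) (hKAsub α'),
        fun h => ((hrel v.1 a v.2.1).2.1 h).mono (le_refl _) (hKAsub α'), fun h => ?_⟩
      exact absurd (show G'.θ a v.1 = 0 by rw [G'.symm]; exact h.2)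
        (theta_a_ne G' a b hne h0 v.2.1 v.2.2)
    · -- inl, B
      refine ⟨fun h => ((hrel v.1 b v.2.2).1 h).mono (le_refl _) (hKBsub β'),
        fun h => ((hrel v.1 b v.2.2).2.1 h).mono (le_refl _) (hKBsub β'), fun h => ?_⟩
      exact absurd (show G'.θ b v.1 = 0 by rw [G'.symm]; exact h.2)
        (theta_b_ne G' a b hne h0 v.2.1 v.2.2)
    · -- A, inl
      refine ⟨fun h => ((hrel a w.1 (Ne.symm w.2.1)).1 h).mono (hKAsub α) (le_refl _),
        fun h => ((hrel a w.1 (Ne.symm w.2.1)).2.1 h).mono (hKAsub α) (le_refl _),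
        fun h => absurd h.2 (theta_a_ne G' a b hne h0 w.2.1 w.2.2)⟩
    · -- A A
      have hαα : α ≠ α' := fun hh => huv (by rw [hh])
      refine ⟨fun _ => ?_, fun h => ?_, fun h => ?_⟩
      · intro x hx y hy
        exact (hcl a).2 (hKAsub α hx) (hKAsub α' hy)
          (fun hh => Set.disjoint_left.1 (hKAdisj α α' hαα) hx (hh ▸ hy))
      · exact absurd h (by simp [StrongAntiAdj, refθ, hαα])
      · exact absurd h.2 (by simp [refθ, hαα])
    · -- A B
      rcases hMr α β' with hm | hm | hm
      · refine ⟨fun _ => hrel1 α β' hm, fun h => ?_, fun h => ?_⟩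
        · exact absurd h (by simp [StrongAntiAdj, refθ, hm])
        · exact absurd h.2 (by simp [refθ, hm])
      · refine ⟨fun h => ?_, fun h => ?_, fun _ => hrel0 α β' hm⟩
        · exact absurd h (by simp [StrongAdj, refθ, hm])
        · exact absurd h (by simp [StrongAntiAdj, refθ, hm])
      · refine ⟨fun h => ?_, fun _ => hrelm α β' hm, fun h => ?_⟩
        · exact absurd h (by simp [StrongAdj, refθ, hm])
        · exact absurd h.2 (by simp [refθ, hm])
    · -- B, inl
      refine ⟨fun h => ((hrel b w.1 (Ne.symm w.2.2)).1 h).mono (hKBsub β) (le_refl _),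
        fun h => ((hrel b w.1 (Ne.symm w.2.2)).2.1 h).mono (hKBsub β) (le_refl _),
        fun h => absurd h.2 (theta_b_ne G' a b hne h0 w.2.1 w.2.2)⟩
    · -- B A
      rcases hMr α' β with hm | hm | hm
      · refine ⟨fun _ => (hrel1 α' β hm).symm2, fun h => ?_, fun h => ?_⟩
        · exact absurd h (by simp [StrongAntiAdj, refθ, hm])
        · exact absurd h.2 (by simp [refθ, hm])
      · refine ⟨fun h => ?_, fun h => ?_, fun _ => ?_⟩
        · exact absurd h (by simp [StrongAdj, refθ, hm])
        · exact absurd h (by simp [StrongAntiAdj, refθ, hm])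
        · have := hrel0 α' β hm
          exact ⟨fun hc => this.1 hc.symm2, fun hc => this.2 hc.symm2⟩
      · refine ⟨fun h => ?_, fun _ => (hrelm α' β hm).symm2, fun h => ?_⟩
        · exact absurd h (by simp [StrongAdj, refθ, hm])
        · exact absurd h.2 (by simp [refθ, hm])
    · -- B B
      have hββ : β ≠ β' := fun hh => huv (by rw [hh])
      refine ⟨fun _ => ?_, fun h => ?_, fun h => ?_⟩
      · intro x hx y hy
        exact (hcl b).2 (hKBsub β hx) (hKBsub β' hy)
          (fun hh => Set.disjoint_left.1 (hKBdisj β β' hββ) hx (hh ▸ hy))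
      · exact absurd h (by simp [StrongAntiAdj, refθ, hββ])
      · exact absurd h.2 (by simp [refθ, hββ])

end ThickTransfer
end Trigraph

namespace Trigraph

lemma card_refV {V' : Type} [Fintype V'] (a b : V') (hne : a ≠ b)
    {Aι Bι : Type} [Finite Aι] [Finite Bι] :
    Nat.card (RefV V' a b Aι Bι) + 2 = Nat.card V' + Nat.card Aι + Nat.card Bι := by
  classical
  have h1 : Nat.card (RefV V' a b Aι Bι) =
      Nat.card {v : V' // v ≠ a ∧ v ≠ b} + (Nat.card Aι + Nat.card Bι) := by
    rw [Nat.card_sum, Nat.card_sum]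
  have h2 : Nat.card {v : V' // v ≠ a ∧ v ≠ b} = Set.ncard (({a, b} : Set V')ᶜ) := by
    rw [← Nat.card_coe_set_eq]
    refine Nat.card_congr (Equiv.subtypeEquivRight ?_)
    intro v
    simp only [Set.mem_compl_iff, Set.mem_insert_iff, Set.mem_singleton_iff]
    push_neg
    rfl
  have h3 := Set.ncard_add_ncard_compl ({a, b} : Set V')
  rw [Set.ncard_pair hne] at h3
  omega

end Trigraph

namespace Trigraph

open Classical

variable {V V' : Type}

/-- A valid refinement of an optimal antithickening along a semiedge gives a
contradiction. -/
lemma refine_contra [Fintype V'] (G : Trigraph V) (G' : Trigraph V') (I : V' → Set V)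
    (hopt : G.OptimalAntithickening G' I)
    (a b : V') (hne : a ≠ b) (h0 : G'.θ a b = 0)
    {Aι Bι : Type} [Finite Aι] [Finite Bι] [Nonempty Aι] [Nonempty Bι]
    (M : Aι → Bι → ℤ)
    (hMr : ∀ α β, M α β = 1 ∨ M α β = 0 ∨ M α β = -1)
    (hM0r : ∀ α β β', M α β = 0 → M α β' = 0 → β = β')
    (hM0l : ∀ α α' β, M α β = 0 → M α' β = 0 → α = α')
    (hNoSq : ∀ α α' β β', α ≠ α' → β ≠ β' → M α β ≠ 1 → M α' β' ≠ 1 →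
      M α' β ≠ -1 → M α β' ≠ -1 → False)
    (hMle : ∃ α β, M α β ≠ 1) (hMge : ∃ α β, M α β ≠ -1)
    (KA : Aι → Set V) (KB : Bι → Set V)
    (hKAne : ∀ α, (KA α).Nonempty) (hKBne : ∀ β, (KB β).Nonempty)
    (hKAsub : ∀ α, KA α ⊆ I a) (hKBsub : ∀ β, KB β ⊆ I b)
    (hKAdisj : ∀ α α', α ≠ α' → Disjoint (KA α) (KA α'))
    (hKBdisj : ∀ β β', β ≠ β' → Disjoint (KB β) (KB β'))
    (hKAcover : I a ⊆ ⋃ α, KA α) (hKBcover : I b ⊆ ⋃ β, KB β)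
    (hrel1 : ∀ α β, M α β = 1 → G.StronglyComplete (KA α) (KB β))
    (hrelm : ∀ α β, M α β = -1 → G.StronglyAnticomplete (KA α) (KB β))
    (hrel0 : ∀ α β, M α β = 0 →
      ¬G.StronglyComplete (KA α) (KB β) ∧ ¬G.StronglyAnticomplete (KA α) (KB β))
    (hcard : 3 ≤ Nat.card Aι + Nat.card Bι) : False := by
  have hth := refT_thickening G G' I a b M hne h0 hMr hM0r hM0l KA KB hopt.1
    hKAne hKBne hKAsub hKBsub hKAdisj hKBdisj hKAcover hKBcover hrel1 hrelm hrel0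
  have hlam := refT_laminar G' a b M hne h0 hMr hM0r hM0l hopt.2.1 hNoSq hMle hMge
  have hle := hopt.2.2 _ _ _ hth hlam
  have hcd := card_refV a b hne (Aι := Aι) (Bι := Bι)
  omega

/-- splitting off a vertex of `I a` strongly complete or strongly anticomplete
to `I b` contradicts optimality. -/
lemma split_off [Fintype V'] (G : Trigraph V) (G' : Trigraph V') (I : V' → Set V)
    (hopt : G.OptimalAntithickening G' I)
    (a b : V') (hne : a ≠ b) (h0 : G'.θ a b = 0)
    (hnsc : ¬ G.StronglyComplete (I a) (I b))
    (hnsac : ¬ G.StronglyAnticomplete (I a) (I b))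
    (x : V) (hx : x ∈ I a)
    (hsx : G.StronglyComplete {x} (I b) ∨ G.StronglyAnticomplete {x} (I b)) : False := by
  have hA2 : ∃ y ∈ I a, y ≠ x := by
    by_contra h
    push_neg at h
    have hAeq : I a = {x} := Set.eq_singleton_iff_unique_mem.2 ⟨hx, h⟩
    rcases hsx with h' | h'
    · exact hnsc (by rw [hAeq]; exact h')
    · exact hnsac (by rw [hAeq]; exact h')
  set s1 : ℤ := if G.StronglyComplete {x} (I b) then 1 else -1 with hs1
  set st : ℤ := if G.StronglyComplete (I a \ {x}) (I b) then 1
    else if G.StronglyAnticomplete (I a \ {x}) (I b) then -1 else 0 with hst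
  have hs1sc : s1 = 1 → G.StronglyComplete {x} (I b) := by
    intro h
    by_contra hc
    rw [hs1] at h
    simp [hc] at h
  have hs1sac : s1 = -1 → G.StronglyAnticomplete {x} (I b) := by
    intro h
    by_cases hc : G.StronglyComplete {x} (I b)
    · rw [hs1] at h; simp [hc] at h
    · exact hsx.resolve_left hc
  have hs1ne : s1 ≠ 0 := by
    rw [hs1]
    split <;> decide
  have hstsc : st = 1 → G.StronglyComplete (I a \ {x}) (I b) := by
    intro h
    by_contra hc
    rw [hst] at h
    simp only [hc, if_false] at h
    split at h <;> simp_all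
  have hstsac : st = -1 → G.StronglyAnticomplete (I a \ {x}) (I b) := by
    intro h
    by_cases hc : G.StronglyComplete (I a \ {x}) (I b)
    · rw [hst] at h; simp [hc] at h
    · by_cases hc' : G.StronglyAnticomplete (I a \ {x}) (I b)
      · exact hc'
      · rw [hst] at h; simp [hc, hc'] at h
  have hst0 : st = 0 → ¬G.StronglyComplete (I a \ {x}) (I b) ∧
      ¬G.StronglyAnticomplete (I a \ {x}) (I b) := by
    intro h
    constructor
    · intro hc; rw [hst] at h; simp [hc] at h
    · intro hc'
      by_cases hc : G.StronglyComplete (I a \ {x}) (I b)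
      · rw [hst] at h; simp [hc] at h
      · rw [hst] at h; simp [hc, hc'] at h
  have hstne1 : G.StronglyComplete {x} (I b) → st ≠ 1 := by
    intro hxsc h
    apply hnsc
    intro u hu v hv
    by_cases hux : u = x
    · exact hxsc u (by simp [hux]) v hv
    · exact hstsc h u ⟨hu, hux⟩ v hv
  have hstnem : G.StronglyAnticomplete {x} (I b) → st ≠ -1 := by
    intro hxsac h
    apply hnsac
    intro u hu v hv
    by_cases hux : u = x
    · exact hxsac u (by simp [hux]) v hv
    · exact hstsac h u ⟨hu, hux⟩ v hv
  refine refine_contra G G' I hopt a b hne h0 (Aι := Bool) (Bι := Unit)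
    (fun s _ => if s then s1 else st) ?_ ?_ ?_ ?_ ?_ ?_
    (fun s => if s then {x} else I a \ {x}) (fun _ => I b)
    ?_ ?_ ?_ ?_ ?_ ?_ ?_ ?_ ?_ ?_ ?_ ?_
  · rintro (_ | _) β <;> simp only [if_true, if_false, Bool.false_eq_true]
    · rw [hst]; split
      · exact Or.inl rfl
      · split
        · exact Or.inr (Or.inr rfl)
        · exact Or.inr (Or.inl rfl)
    · rw [hs1]; split
      · exact Or.inl rfl
      · exact Or.inr (Or.inr rfl)
  · intro α β β' _ _
    exact Subsingleton.elim β β'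
  · rintro (_ | _) (_ | _) β h1 h2
    · rfl
    · simp only [if_true, Bool.false_eq_true, if_false] at h1 h2
      exact absurd h2 hs1ne
    · simp only [if_true, Bool.false_eq_true, if_false] at h1 h2
      exact absurd h1 hs1ne
    · rfl
  · intro α α' β β' _ hββ _ _ _ _
    exact hββ (Subsingleton.elim β β')
  · -- hMle
    by_cases hxsc : G.StronglyComplete {x} (I b)
    · exact ⟨false, (), by simpa using hstne1 hxsc⟩
    · refine ⟨true, (), ?_⟩
      simp only [if_true]
      rw [hs1]
      simp [hxsc]
  · -- hMge
    by_cases hxsac : G.StronglyAnticomplete {x} (I b)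
    · exact ⟨false, (), by simpa using hstnem hxsac⟩
    · refine ⟨true, (), ?_⟩
      simp only [if_true]
      intro h
      exact hxsac (hs1sac h)
  · rintro (_ | _)
    · obtain ⟨y, hy, hyx⟩ := hA2
      exact ⟨y, hy, hyx⟩
    · simp
  · intro β
    exact (hopt.1.1 b).1
  · rintro (_ | _)
    · simp
    · simp [Set.singleton_subset_iff, hx]
  · intro β
    exact le_refl _
  · rintro (_ | _) (_ | _) hss
    · exact absurd rfl hss
    · simp only [Bool.false_eq_true, if_false, if_true]
      exact Set.disjoint_sdiff_left.mono_right (by simp)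
    · simp only [Bool.false_eq_true, if_false, if_true]
      exact (Set.disjoint_sdiff_left.mono_right (by simp)).symm
    · exact absurd rfl hss
  · intro β β' hss
    exact absurd (Subsingleton.elim β β') hss
  · intro v hv
    by_cases hvx : v = x
    · exact Set.mem_iUnion.2 ⟨true, by simp [hvx]⟩
    · exact Set.mem_iUnion.2 ⟨false, by simp [hv, hvx]⟩
  · intro v hv
    exact Set.mem_iUnion.2 ⟨(), hv⟩
  · rintro (_ | _) β h
    · simp only [Bool.false_eq_true, if_false] at h ⊢
      exact hstsc h
    · simp only [if_true] at h ⊢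
      exact (hs1sc h).mono (le_refl _) (le_refl _)
  · rintro (_ | _) β h
    · simp only [Bool.false_eq_true, if_false] at h ⊢
      exact hstsac h
    · simp only [if_true] at h ⊢
      exact (hs1sac h).mono (le_refl _) (le_refl _)
  · rintro (_ | _) β h
    · simp only [Bool.false_eq_true, if_false] at h ⊢
      exact hst0 h
    · simp only [if_true] at h
      exact absurd h hs1ne
  · simp [Nat.card_eq_fintype_card]

end Trigraph


/-- In an optimal antithickening of a connected non-degenerate trigraph,
the preimage of any semiedge is either a semiedge of G or a deletion-minimal homogeneous
pair of strong cliques of G. -/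
theorem semiedge_image_deletionMinimal {V V' : Type} [Fintype V] [Fintype V']
    (G : Trigraph V) (hconn : G.Connected) (hnd : G.NonDegenerate)
    (G' : Trigraph V') (I : V' → Set V) (hopt : G.OptimalAntithickening G' I)
    (a b : V') (hab : G'.SemiAdj a b) :
    (∃ x y : V, I a = {x} ∧ I b = {y} ∧ G.SemiAdj x y) ∨
      G.DeletionMinimal (I a) (I b) := by
  classical
  obtain ⟨hneq, h0⟩ := hab
  have hthick := hopt.1
  have hAne : (I a).Nonempty := (hthick.1 a).1
  have hBne : (I b).Nonempty := (hthick.1 b).1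
  have hclA : G.IsStrongClique (I a) := (hthick.1 a).2
  have hclB : G.IsStrongClique (I b) := (hthick.1 b).2
  have hdisj : Disjoint (I a) (I b) := hthick.2.1 a b hneq
  have hsemi := (hthick.2.2.2 a b hneq).2.2 ⟨hneq, h0⟩
  by_cases hsing : (∃ x, I a = {x}) ∧ (∃ y, I b = {y})
  · obtain ⟨⟨x, hxA⟩, ⟨y, hyB⟩⟩ := hsing
    have hxm : x ∈ I a := by rw [hxA]; rfl
    have hym : y ∈ I b := by rw [hyB]; rfl
    refine Or.inl ⟨x, y, hxA, hyB, hdisj.ne_of_mem hxm hym, ?_⟩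
    rcases G.range_mem x y with h | h | h
    · refine absurd ?_ hsemi.1
      intro u hu v hv
      rw [hxA, Set.mem_singleton_iff] at hu
      rw [hyB, Set.mem_singleton_iff] at hv
      subst hu; subst hv; exact h
    · exact h
    · refine absurd ?_ hsemi.2
      intro u hu v hv
      rw [hxA, Set.mem_singleton_iff] at hu
      rw [hyB, Set.mem_singleton_iff] at hv
      subst hu; subst hv; exact h
  · right
    have hns : ¬∃ x y, I a = {x} ∧ I b = {y} :=
      fun ⟨x, y, h1, h2⟩ => hsing ⟨⟨x, h1⟩, ⟨y, h2⟩⟩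
    have hhom : ∀ v ∉ I a ∪ I b,
        (G.StronglyComplete {v} (I a) ∨ G.StronglyAnticomplete {v} (I a)) ∧
        (G.StronglyComplete {v} (I b) ∨ G.StronglyAnticomplete {v} (I b)) := by
      intro v hv
      have hvU : v ∈ ⋃ w, I w := by rw [hthick.2.2.1]; trivial
      obtain ⟨s, ⟨w, rfl⟩, hvw⟩ := hvU
      have hwa : w ≠ a := fun hh => hv (Or.inl (hh ▸ hvw))
      have hwb : w ≠ b := fun hh => hv (Or.inr (hh ▸ hvw))
      constructor
      · have h1 : G'.θ w a ≠ 0 := fun hh =>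
          Trigraph.theta_a_ne G' a b hneq h0 hwa hwb (by rw [G'.symm]; exact hh)
        rcases G'.range_mem w a with h | h | h
        · exact Or.inl (((hthick.2.2.2 w a hwa).1 h).mono
            (Set.singleton_subset_iff.2 hvw) (le_refl _))
        · exact absurd h h1
        · exact Or.inr (((hthick.2.2.2 w a hwa).2.1 h).mono
            (Set.singleton_subset_iff.2 hvw) (le_refl _))
      · have h1 : G'.θ w b ≠ 0 := fun hh =>
          Trigraph.theta_b_ne G' a b hneq h0 hwa hwb (by rw [G'.symm]; exact hh)
        rcases G'.range_mem w b with h | h | h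
        · exact Or.inl (((hthick.2.2.2 w b hwb).1 h).mono
            (Set.singleton_subset_iff.2 hvw) (le_refl _))
        · exact absurd h h1
        · exact Or.inr (((hthick.2.2.2 w b hwb).2.1 h).mono
            (Set.singleton_subset_iff.2 hvw) (le_refl _))
    refine ⟨⟨hAne, hBne, hdisj, hclA, hclB, hns, hhom⟩, ?_, ?_, ?_⟩
    · -- HasSquareIn (I a ∪ I b)
      by_contra hnosq
      have : Nonempty ↥(I a) := hAne.to_subtype
      have : Nonempty ↥(I b) := hBne.to_subtype
      refine Trigraph.refine_contra G G' I hopt a b hneq h0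
        (Aι := ↥(I a)) (Bι := ↥(I b)) (fun x y => G.θ x.1 y.1)
        (fun x y => G.range_mem x.1 y.1) ?_ ?_ ?_ ?_ ?_
        (fun x => {x.1}) (fun y => {y.1}) (fun x => ⟨x.1, rfl⟩) (fun y => ⟨y.1, rfl⟩)
        (fun x => Set.singleton_subset_iff.2 x.2) (fun y => Set.singleton_subset_iff.2 y.2)
        ?_ ?_ ?_ ?_ ?_ ?_ ?_ ?_
      · -- hM0r
        intro x y y' h1 h2
        by_contra hyy
        exact G.semi_matching x.1 y.1 y'.1 (hdisj.ne_of_mem x.2 y.2)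
          (hdisj.ne_of_mem x.2 y'.2) (fun hh => hyy (Subtype.ext hh)) h1 h2
      · -- hM0l
        intro x x' y h1 h2
        by_contra hxx
        exact G.semi_matching y.1 x.1 x'.1 (hdisj.ne_of_mem x.2 y.2).symm
          (hdisj.ne_of_mem x'.2 y.2).symm (fun hh => hxx (Subtype.ext hh))
          (by rw [G.symm]; exact h1) (by rw [G.symm]; exact h2)
      · -- hNoSq
        intro x x' y y' hxx hyy h1 h2 h3 h4
        have hx1 : x.1 ≠ x'.1 := fun hh => hxx (Subtype.ext hh)
        have hy1 : y.1 ≠ y'.1 := fun hh => hyy (Subtype.ext hh)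
        refine hnosq ⟨x.1, x'.1, y.1, y'.1,
          ⟨Trigraph.antiAdj_of_ne (hdisj.ne_of_mem x.2 y.2) h1,
           Trigraph.antiAdj_of_ne (hdisj.ne_of_mem x'.2 y'.2) h2,
           ⟨hx1, Or.inl (hclA x.2 x'.2 hx1)⟩,
           Trigraph.adj_of_ne (hdisj.ne_of_mem x'.2 y.2) h3,
           ⟨hy1, Or.inl (hclB y.2 y'.2 hy1)⟩,
           Trigraph.adj_of_ne (hdisj.ne_of_mem x.2 y'.2).symm
             (fun hh => h4 ((G.symm x.1 y'.1).trans hh))⟩, ?_⟩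
        intro w hw
        simp only [Set.mem_insert_iff, Set.mem_singleton_iff] at hw
        rcases hw with rfl | rfl | rfl | rfl
        exacts [Or.inl x.2, Or.inl x'.2, Or.inr y.2, Or.inr y'.2]
      · -- hMle
        by_contra hq
        push_neg at hq
        exact hsemi.1 (fun u hu v hv => hq ⟨u, hu⟩ ⟨v, hv⟩)
      · -- hMge
        by_contra hq
        push_neg at hq
        exact hsemi.2 (fun u hu v hv => hq ⟨u, hu⟩ ⟨v, hv⟩)
      · -- KA disjoint
        intro x x' hxx
        exact Set.disjoint_singleton.2 (fun hh => hxx (Subtype.ext hh))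
      · intro y y' hyy
        exact Set.disjoint_singleton.2 (fun hh => hyy (Subtype.ext hh))
      · intro v hv
        exact Set.mem_iUnion.2 ⟨⟨v, hv⟩, rfl⟩
      · intro v hv
        exact Set.mem_iUnion.2 ⟨⟨v, hv⟩, rfl⟩
      · rintro x y h u rfl v rfl
        exact h
      · rintro x y h u rfl v rfl
        exact h
      · intro x y h
        constructor
        · intro hc
          have := hc x.1 rfl y.1 rfl
          simp only [Trigraph.StrongAdj, h] at this
          exact absurd this (by decide)
        · intro hc
          have := hc x.1 rfl y.1 rfl
          simp only [Trigraph.StrongAntiAdj, h] at this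
          exact absurd this (by decide)
      · -- cardinality
        rw [Nat.card_coe_set_eq, Nat.card_coe_set_eq]
        have h1 : 0 < (I a).ncard := (Set.ncard_pos (Set.toFinite _)).2 hAne
        have h2 : 0 < (I b).ncard := (Set.ncard_pos (Set.toFinite _)).2 hBne
        have h3 : ¬((I a).ncard = 1 ∧ (I b).ncard = 1) :=
          fun ⟨u1, u2⟩ => hsing ⟨Set.ncard_eq_one.1 u1, Set.ncard_eq_one.1 u2⟩
        omega
    · intro x hx
      exact ⟨fun h => Trigraph.split_off G G' I hopt a b hneq h0 hsemi.1 hsemi.2 x hx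
          (Or.inl h),
        fun h => Trigraph.split_off G G' I hopt a b hneq h0 hsemi.1 hsemi.2 x hx
          (Or.inr h)⟩
    · intro y hy
      have h0' : G'.θ b a = 0 := by rw [G'.symm]; exact h0
      have hnsc' : ¬ G.StronglyComplete (I b) (I a) := fun h => hsemi.1 h.symm2
      have hnsac' : ¬ G.StronglyAnticomplete (I b) (I a) := fun h => hsemi.2 h.symm2
      exact ⟨fun h => Trigraph.split_off G G' I hopt b a hneq.symm h0' hnsc' hnsac' y hy
          (Or.inl h),
        fun h => Trigraph.split_off G G' I hopt b a hneq.symm h0' hnsc' hnsac' y hy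
          (Or.inr h)⟩
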